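/- arXiv:1711.05933 — 4 statements merged into one kernel-verified Lean document; each statement's English description precedes it below -/
import Mathlib

section
/- Let B be a subgroup of G contained in Z. Then the inflation homomorphism inf : H²(G/B, D) → H²(G, D) is surjective and its kernel N is isomorphic to Hom(B, D); consequently H²(G, D) ≅ H²(G/B, D)/N with N ≅ Hom(B, D). -/
/-!
Setting (central products): `G` is a group with normal subgroups `H` and `K` such that
`G = HK` (i.e. `H ⊔ K = ⊤`) and `[H, K] = 1` (i.e. every element of `H` commutes with
every element of `K`).  We set `A = H ⊓ K` and `Z = ⁅H,H⁆ ⊓ ⁅K,K⁆`; both are central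
in `G`.  Coefficients are taken in a divisible abelian group `D`, regarded as a trivial
module.  Second cohomology `H2 X D` is realized concretely as (inhomogeneous)
2-cocycles modulo 2-coboundaries, and `Hom(X, D)` is realized as `Additive X →+ D`.
-/

open scoped TensorProduct

set_option maxHeartbeats 1000000
set_option synthInstance.maxHeartbeats 1000000
set_option synthInstance.maxSize 2000

namespace SchurCP
open scoped Pointwise

variable (G : Type) [Group G] (D : Type) [AddCommGroup D]

/-- The group of 2-cocycles on `G` with values in the trivial module `D`. -/
def cocycles2 : AddSubgroup (G → G → D) where
  carrier := {f | ∀ g h k : G, f g h + f (g * h) k = f h k + f g (h * k)}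
  zero_mem' := by intro g h k; simp
  add_mem' := by
    intro a b ha hb g h k
    simp only [Pi.add_apply]
    rw [add_add_add_comm, ha g h k, hb g h k, add_add_add_comm]
  neg_mem' := by
    intro a ha g h k
    simp only [Pi.neg_apply]
    rw [← neg_add, ← neg_add, ha g h k]

/-- The group of 2-coboundaries on `G` with values in the trivial module `D`. -/
def coboundaries2 : AddSubgroup (G → G → D) where
  carrier := {f | ∃ φ : G → D, ∀ g h : G, f g h = φ g + φ h - φ (g * h)}
  zero_mem' := ⟨0, by simp⟩
  add_mem' := by
    rintro a b ⟨φ, hφ⟩ ⟨ψ, hψ⟩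
    exact ⟨φ + ψ, fun g h => by simp only [Pi.add_apply, hφ g h, hψ g h]; abel⟩
  neg_mem' := by
    rintro a ⟨φ, hφ⟩
    exact ⟨-φ, fun g h => by simp only [Pi.neg_apply, hφ g h]; abel⟩

/-- The second cohomology group `H²(G, D)` of `G` with coefficients in the
trivial module `D`. -/
def H2 : Type := cocycles2 G D ⧸ (coboundaries2 G D).addSubgroupOf (cocycles2 G D)

instance : AddCommGroup (H2 G D) :=
  QuotientAddGroup.Quotient.addCommGroup ((coboundaries2 G D).addSubgroupOf (cocycles2 G D))

variable {G D}

/-- The cohomology class of a 2-cocycle. -/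
abbrev H2mk (f : cocycles2 G D) : H2 G D := QuotientAddGroup.mk f

/-- Pullback of a 2-cocycle along a group homomorphism. -/
def pullCocycle {G' : Type} [Group G'] (π : G' →* G) :
    cocycles2 G D →+ cocycles2 G' D where
  toFun f := ⟨fun x y => (f : G → G → D) (π x) (π y), by
    intro x y z
    simpa only [map_mul] using f.2 (π x) (π y) (π z)⟩
  map_zero' := rfl
  map_add' _ _ := rfl

/-- The homomorphism `H²(G, D) → H²(G', D)` induced by a group homomorphism
`π : G' → G`; this specializes to restriction maps (for inclusions of subgroups)
and to inflation maps (for quotient maps). -/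
def H2Map {G' : Type} [Group G'] (π : G' →* G) : H2 G D →+ H2 G' D :=
  QuotientAddGroup.map _ _ (pullCocycle π) (by
    intro f hf
    rw [AddSubgroup.mem_addSubgroupOf] at hf
    rw [AddSubgroup.mem_comap, AddSubgroup.mem_addSubgroupOf]
    obtain ⟨φ, hφ⟩ := hf
    exact ⟨fun x => φ (π x), fun x y => by
      show (f : G → G → D) (π x) (π y) = _
      rw [hφ (π x) (π y), ← map_mul]⟩)

theorem commutator_le_self {X : Type} [Group X] (H : Subgroup X) : ⁅H, H⁆ ≤ H := by
  rw [Subgroup.commutator_le]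
  intro g₁ h₁ g₂ h₂
  rw [commutatorElement_def]
  exact H.mul_mem (H.mul_mem (H.mul_mem h₁ h₂) (H.inv_mem h₁)) (H.inv_mem h₂)

theorem inf_commutator_le_inf {X : Type} [Group X] (H K : Subgroup X) :
    ⁅H, H⁆ ⊓ ⁅K, K⁆ ≤ H ⊓ K :=
  inf_le_inf (commutator_le_self H) (commutator_le_self K)

theorem subgroupOf_le {X : Type} [Group X] {B C : Subgroup X} (h : B ≤ C)
    (J : Subgroup X) : B.subgroupOf J ≤ C.subgroupOf J := fun _x hx => h hx

/-- The natural projection `X/N → X/M` for `N ≤ M`. -/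
def quotProj {X : Type} [Group X] {N M : Subgroup X} [N.Normal] [M.Normal] (h : N ≤ M) :
    (X ⧸ N) →* (X ⧸ M) :=
  QuotientGroup.map N M (MonoidHom.id X) (by rwa [Subgroup.comap_id])

/-- The inflation homomorphism `H²(X/M, D) → H²(X/N, D)` for `N ≤ M`. -/
def inflMap {X : Type} [Group X] {N M : Subgroup X} [N.Normal] [M.Normal]
    (h : N ≤ M) (D : Type) [AddCommGroup D] : H2 (X ⧸ M) D →+ H2 (X ⧸ N) D :=
  H2Map (quotProj h)

/-- The natural homomorphism `H/(A ∩ H) → X/A` for subgroups `A, H` of `X`;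
for `A ≤ H` this realizes `H/A` as a subgroup of `X/A`. -/
def quotInclusion {X : Type} [Group X] (H A : Subgroup X) [A.Normal]
    [(A.subgroupOf H).Normal] : (↥H ⧸ A.subgroupOf H) →* X ⧸ A :=
  QuotientGroup.map (A.subgroupOf H) A H.subtype (fun _x hx => hx)

/-- The abelian tensor product `X ⊗ Y = X/[X,X] ⊗_ℤ Y/[Y,Y]` of two groups. -/
abbrev AbTensor (X Y : Type) [Group X] [Group Y] : Type :=
  TensorProduct ℤ (Additive (Abelianization X)) (Additive (Abelianization Y))

/-- The element `x[X,X] ⊗ y[Y,Y]` of the abelian tensor product. -/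
noncomputable abbrev tmulAb {X Y : Type} [Group X] [Group Y] (x : X) (y : Y) :
    AbTensor X Y :=
  Additive.ofMul (Abelianization.of x) ⊗ₜ[ℤ] Additive.ofMul (Abelianization.of y)

/-- The map on abelian tensor products induced by a pair of group homomorphisms. -/
noncomputable def abTensorMap {X Y X' Y' : Type} [Group X] [Group Y] [Group X'] [Group Y']
    (f : X →* X') (g : Y →* Y') : AbTensor X Y →ₗ[ℤ] AbTensor X' Y' :=
  TensorProduct.map (MonoidHom.toAdditive (Abelianization.map f)).toIntLinearMap
    (MonoidHom.toAdditive (Abelianization.map g)).toIntLinearMap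

open scoped Pointwise in
theorem coc (F : cocycles2 G D) : ∀ g h k : G, F.1 g h + F.1 (g*h) k = F.1 h k + F.1 g (h*k) := F.2

theorem coc_one_left (F : cocycles2 G D) (g : G) : F.1 1 g = F.1 1 1 := by
  have := coc F 1 1 g; simpa using this.symm

theorem coc_one_right (F : cocycles2 G D) (g : G) : F.1 g 1 = F.1 1 1 := by
  have := coc F g 1 1; simpa using this

theorem coc_inv (F : cocycles2 G D) (g : G) : F.1 g⁻¹ g = F.1 g g⁻¹ := by
  have := coc F g g⁻¹ g
  simpa [coc_one_left, coc_one_right] using this.symm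

@[ext] structure Ext (F : cocycles2 G D) : Type where
  val : D
  elm : G

namespace Ext
variable {F : cocycles2 G D}

instance : Group (Ext F) where
  mul x y := ⟨x.val + y.val + F.1 x.elm y.elm - F.1 1 1, x.elm * y.elm⟩
  one := ⟨0, 1⟩
  inv x := ⟨-x.val - F.1 x.elm x.elm⁻¹ + F.1 1 1, x.elm⁻¹⟩
  mul_assoc x y z := by
    ext
    · show x.val + y.val + F.1 x.elm y.elm - F.1 1 1 + z.val + F.1 (x.elm * y.elm) z.elm - F.1 1 1
        = x.val + (y.val + z.val + F.1 y.elm z.elm - F.1 1 1) + F.1 x.elm (y.elm * z.elm) - F.1 1 1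
      have h := coc F x.elm y.elm z.elm
      calc x.val + y.val + F.1 x.elm y.elm - F.1 1 1 + z.val + F.1 (x.elm * y.elm) z.elm - F.1 1 1
          = x.val + y.val + z.val + (F.1 x.elm y.elm + F.1 (x.elm * y.elm) z.elm) - F.1 1 1 - F.1 1 1 := by abel
        _ = x.val + y.val + z.val + (F.1 y.elm z.elm + F.1 x.elm (y.elm * z.elm)) - F.1 1 1 - F.1 1 1 := by rw [h]
        _ = x.val + (y.val + z.val + F.1 y.elm z.elm - F.1 1 1) + F.1 x.elm (y.elm * z.elm) - F.1 1 1 := by abel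
    · show x.elm * y.elm * z.elm = x.elm * (y.elm * z.elm); rw [mul_assoc]
  one_mul x := by
    ext
    · show 0 + x.val + F.1 1 x.elm - F.1 1 1 = x.val
      rw [coc_one_left]; abel
    · show 1 * x.elm = x.elm; rw [one_mul]
  mul_one x := by
    ext
    · show x.val + 0 + F.1 x.elm 1 - F.1 1 1 = x.val
      rw [coc_one_right]; abel
    · show x.elm * 1 = x.elm; rw [mul_one]
  inv_mul_cancel x := by
    ext
    · show -x.val - F.1 x.elm x.elm⁻¹ + F.1 1 1 + x.val + F.1 x.elm⁻¹ x.elm - F.1 1 1 = 0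
      rw [coc_inv]; abel
    · show x.elm⁻¹ * x.elm = 1; rw [inv_mul_cancel]

theorem mul_def (x y : Ext F) : x * y = ⟨x.val + y.val + F.1 x.elm y.elm - F.1 1 1, x.elm * y.elm⟩ := rfl
theorem one_def : (1 : Ext F) = ⟨0, 1⟩ := rfl
theorem mul_elm (x y : Ext F) : (x * y).elm = x.elm * y.elm := rfl
theorem mul_val (x y : Ext F) : (x * y).val = x.val + y.val + F.1 x.elm y.elm - F.1 1 1 := rfl
theorem inv_elm (x : Ext F) : (x⁻¹).elm = x.elm⁻¹ := rfl

/-- projection -/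
def proj (F : cocycles2 G D) : Ext F →* G where
  toFun x := x.elm
  map_one' := rfl
  map_mul' _ _ := rfl

theorem proj_surj : Function.Surjective (proj F) := fun g => ⟨⟨0, g⟩, rfl⟩

theorem central_of_elm_one (x : Ext F) (hx : x.elm = 1) (y : Ext F) : x * y = y * x := by
  ext
  · show x.val + y.val + F.1 x.elm y.elm - F.1 1 1 = y.val + x.val + F.1 y.elm x.elm - F.1 1 1
    rw [hx, coc_one_left F y.elm, coc_one_right F y.elm]; abel
  · show x.elm * y.elm = y.elm * x.elm
    rw [hx, one_mul, mul_one]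

end Ext

open scoped commutatorElement in
theorem conj_commutator_eq {M : Type} [Group M] (z p q : M)
    (hc : ∀ w : M, ⁅⁅z,p⁆, w⁆ = 1) (hc' : ∀ w : M, ⁅⁅z,q⁆, w⁆ = 1) :
    z * ⁅p,q⁆ * z⁻¹ = ⁅p,q⁆ := by
  trans (⁅⁅z,p⁆, p * ⁅z,q⁆ * q * p⁻¹⁆ * (p * (⁅⁅z,q⁆, q * p⁻¹ * q⁻¹⁆ * (q * p⁻¹ * q⁻¹))))
  · group
  · rw [hc, hc']; group

theorem conj_central {M : Type} [Group M] {u : M} (hu : ∀ y, u * y = y * u) (a : M) :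
    u * a * u⁻¹ = a := by
  rw [hu a, mul_inv_cancel_right]

section Central

variable {F : cocycles2 G D} (H K : Subgroup G)
variable (hprod : H ⊔ K = ⊤) (hcomm : ∀ h ∈ H, ∀ k ∈ K, Commute h k)

open Ext

open scoped commutatorElement in
/-- elements of `⁅comap proj H, comap proj H⁆` commute with lifts of `K` -/
theorem claim1 {F : cocycles2 G D} {H K : Subgroup G}
    (hcomm : ∀ h ∈ H, ∀ k ∈ K, Commute h k)
    (y : Ext F) (hy : y.elm ∈ K)
    {w : Ext F} (hw : w ∈ ⁅H.comap (proj F), H.comap (proj F)⁆) :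
    y * w = w * y := by
  have key : ∀ w' ∈ ⁅H.comap (proj F), H.comap (proj F)⁆,
      (MulAut.conj y).toMonoidHom w' = (MonoidHom.id (Ext F)) w' := by
    intro w' hw'
    rw [Subgroup.commutator_def] at hw'
    refine MonoidHom.eqOn_closure ?_ hw'
    rintro _ ⟨p, hp, q, hq, rfl⟩
    show y * ⁅p, q⁆ * y⁻¹ = ⁅p, q⁆
    have hcen : ∀ p' : Ext F, p'.elm ∈ H → ∀ w : Ext F, ⁅⁅y, p'⁆, w⁆ = 1 := by
      intro p' hp' w
      rw [commutatorElement_eq_one_iff_commute]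
      have helm : (⁅y, p'⁆ : Ext F).elm = 1 := by
        show (proj F) ⁅y, p'⁆ = 1
        rw [map_commutatorElement, commutatorElement_eq_one_iff_commute]
        exact (hcomm _ hp' _ hy).symm
      exact central_of_elm_one _ helm w
    exact conj_commutator_eq y p q (hcen p hp) (hcen q hq)
  have := key w hw
  simp only [MulEquiv.coe_toMonoidHom, MulAut.conj_apply, MonoidHom.id_apply] at this
  calc y * w = y * w * y⁻¹ * y := by rw [inv_mul_cancel_right]
    _ = w * y := by rw [this]

theorem lift_central {F : cocycles2 G D} {H K : Subgroup G} [H.Normal] [K.Normal]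
    (hprod : H ⊔ K = ⊤) (hcomm : ∀ h ∈ H, ∀ k ∈ K, Commute h k)
    {B : Subgroup G} (hB : B ≤ ⁅H, H⁆ ⊓ ⁅K, K⁆)
    (x : Ext F) (hx : x.elm ∈ B) (y : Ext F) : x * y = y * x := by
  -- x commutes with lifts of K
  have hxK : ∀ y : Ext F, y.elm ∈ K → x * y = y * x := by
    intro y hy
    have hxH : x.elm ∈ ⁅H, H⁆ := ((hB hx).1)
    have hmap : Subgroup.map (proj F) ⁅H.comap (proj F), H.comap (proj F)⁆ = ⁅H, H⁆ := by
      rw [Subgroup.map_commutator, Subgroup.map_comap_eq_self_of_surjective proj_surj]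
    rw [← hmap] at hxH
    obtain ⟨w, hw, hwx⟩ := hxH
    have hu : (x * w⁻¹).elm = 1 := by
      rw [mul_elm, inv_elm, show w.elm = x.elm from hwx, mul_inv_cancel]
    have hxw : x = (x * w⁻¹) * w := by rw [inv_mul_cancel_right]
    rw [hxw]
    calc (x * w⁻¹) * w * y = (x * w⁻¹) * (y * w) := by rw [mul_assoc, claim1 hcomm y hy hw]
      _ = y * ((x * w⁻¹) * w) := by
          rw [← mul_assoc, central_of_elm_one _ hu y, mul_assoc]
  have hxH : ∀ y : Ext F, y.elm ∈ H → x * y = y * x := by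
    intro y hy
    have hcomm' : ∀ h ∈ K, ∀ k ∈ H, Commute h k := fun h hh k hk => (hcomm k hk h hh).symm
    have hxK' : x.elm ∈ ⁅K, K⁆ := ((hB hx).2)
    have hmap : Subgroup.map (proj F) ⁅K.comap (proj F), K.comap (proj F)⁆ = ⁅K, K⁆ := by
      rw [Subgroup.map_commutator, Subgroup.map_comap_eq_self_of_surjective proj_surj]
    rw [← hmap] at hxK'
    obtain ⟨w, hw, hwx⟩ := hxK'
    have hu : (x * w⁻¹).elm = 1 := by
      rw [mul_elm, inv_elm, show w.elm = x.elm from hwx, mul_inv_cancel]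
    have hxw : x = (x * w⁻¹) * w := by rw [inv_mul_cancel_right]
    rw [hxw]
    calc (x * w⁻¹) * w * y = (x * w⁻¹) * (y * w) := by rw [mul_assoc, claim1 hcomm' y hy hw]
      _ = y * ((x * w⁻¹) * w) := by
          rw [← mul_assoc, central_of_elm_one _ hu y, mul_assoc]
  -- decompose y
  have hy : y.elm ∈ (H : Set G) * (K : Set G) := by
    rw [← Subgroup.mul_normal H K, hprod]
    trivial
  obtain ⟨h, hh, k, hk, hy⟩ := hy
  have hdec : y = (⟨y.val - F.1 h k + F.1 1 1, h⟩ : Ext F) * ⟨0, k⟩ := by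
    ext
    · show y.val = y.val - F.1 h k + F.1 1 1 + 0 + F.1 h k - F.1 1 1
      abel
    · exact hy.symm
  rw [hdec, ← mul_assoc, hxH ⟨y.val - F.1 h k + F.1 1 1, h⟩ hh, mul_assoc,
    hxK ⟨0, k⟩ hk, ← mul_assoc]

end Central

open Ext

section Splitting

variable {G : Type} [Group G] {D : Type} [AddCommGroup D]

theorem exists_beta {F : cocycles2 G D} {H K : Subgroup G} [H.Normal] [K.Normal]
    (hprod : H ⊔ K = ⊤) (hcomm : ∀ h ∈ H, ∀ k ∈ K, Commute h k)
    {B : Subgroup G} (hB : B ≤ ⁅H, H⁆ ⊓ ⁅K, K⁆) [DivisibleBy D ℤ] :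
    ∃ β : ↥B → D, ∀ b b' : ↥B,
      β (b * b') = β b + β b' + F.1 ↑b ↑b' - F.1 1 1 := by
  letI instComm : CommGroup ↥(B.comap (proj F)) :=
    { (inferInstance : Group ↥(B.comap (proj F))) with
      mul_comm := fun a b => Subtype.ext (lift_central hprod hcomm hB a.1 a.2 b.1) }
  have hmem1 : ∀ d : D, (⟨d, 1⟩ : Ext F) ∈ B.comap (proj F) := fun d => B.one_mem
  have hmemb : ∀ b : ↥B, (⟨0, ↑b⟩ : Ext F) ∈ B.comap (proj F) := fun b => b.2
  set j : D →+ Additive ↥(B.comap (proj F)) :=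
    AddMonoidHom.mk' (fun d => Additive.ofMul (⟨⟨d, 1⟩, hmem1 d⟩ : ↥(B.comap (proj F))))
      (by
        intro d d'
        apply congrArg Additive.ofMul
        apply Subtype.ext
        show (⟨d + d', 1⟩ : Ext F) = ⟨d, 1⟩ * ⟨d', 1⟩
        ext
        · show d + d' = d + d' + F.1 1 1 - F.1 1 1
          abel
        · show (1 : G) = 1 * 1
          rw [mul_one]) with hj
  have jinj : Function.Injective j := by
    intro d d' h
    have := congrArg (fun z => ((Additive.toMul z : ↥(B.comap (proj F))) : Ext F).val) h
    simpa [hj] using this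
  obtain ⟨L, hL⟩ := (Module.Baer.of_divisible D).injective.out j.toIntLinearMap jinj
    (LinearMap.id : D →ₗ[ℤ] D)
  have hLj : ∀ d : D, L (Additive.ofMul (⟨⟨d, 1⟩, hmem1 d⟩ : ↥(B.comap (proj F)))) = d :=
    fun d => hL d
  refine ⟨fun b => - L (Additive.ofMul (⟨⟨0, ↑b⟩, hmemb b⟩ : ↥(B.comap (proj F)))), ?_⟩
  intro b b'
  have hprodmem : (⟨⟨0, ↑b⟩, hmemb b⟩ : ↥(B.comap (proj F))) * ⟨⟨0, ↑b'⟩, hmemb b'⟩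
      = ⟨⟨F.1 ↑b ↑b' - F.1 1 1, 1⟩, hmem1 _⟩ * ⟨⟨0, ↑(b * b')⟩, hmemb (b*b')⟩ := by
    apply Subtype.ext
    show (⟨0, (↑b : G)⟩ : Ext F) * ⟨0, ↑b'⟩ = ⟨F.1 ↑b ↑b' - F.1 1 1, 1⟩ * ⟨0, ↑(b * b')⟩
    ext
    · show 0 + 0 + F.1 ↑b ↑b' - F.1 1 1
        = F.1 ↑b ↑b' - F.1 1 1 + 0 + F.1 1 ↑(b*b') - F.1 1 1
      rw [coc_one_left F ((b * b' : ↥B) : G)]; abel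
    · show (↑b * ↑b' : G) = 1 * ↑(b * b')
      rw [one_mul]; rfl
  beta_reduce
  have hadd := congrArg L (congrArg Additive.ofMul hprodmem)
  rw [ofMul_mul, ofMul_mul, map_add, map_add, hLj] at hadd
  have h2 : L (Additive.ofMul (⟨⟨0, ↑(b*b')⟩, hmemb (b*b')⟩ : ↥(B.comap (proj F))))
      = L (Additive.ofMul (⟨⟨0, ↑b⟩, hmemb b⟩ : ↥(B.comap (proj F))))
        + L (Additive.ofMul (⟨⟨0, ↑b'⟩, hmemb b'⟩ : ↥(B.comap (proj F))))
        - (F.1 ↑b ↑b' - F.1 1 1) :=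
    eq_sub_of_add_eq (by rw [add_comm]; exact hadd.symm)
  rw [h2]
  abel

end Splitting

open Ext

section Invariant

variable {G : Type} [Group G] {D : Type} [AddCommGroup D]

theorem B_central_G {H K : Subgroup G} [H.Normal] [K.Normal]
    (hprod : H ⊔ K = ⊤) (hcomm : ∀ h ∈ H, ∀ k ∈ K, Commute h k)
    {B : Subgroup G} (hB : B ≤ ⁅H, H⁆ ⊓ ⁅K, K⁆) {b : G} (hb : b ∈ B) (g : G) :
    b * g = g * b :=
  congrArg Ext.elm
    (lift_central (F := (0 : cocycles2 G ℤ)) hprod hcomm hB ⟨0, b⟩ hb ⟨0, g⟩)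

theorem exists_invariant {F : cocycles2 G D} {H K : Subgroup G} [H.Normal] [K.Normal]
    (hprod : H ⊔ K = ⊤) (hcomm : ∀ h ∈ H, ∀ k ∈ K, Commute h k)
    {B : Subgroup G} [B.Normal] (hB : B ≤ ⁅H, H⁆ ⊓ ⁅K, K⁆) [DivisibleBy D ℤ] :
    ∃ (f' : G → G → D) (ψ : G → D),
      (∀ g h, f' g h = F.1 g h + (ψ g + ψ h - ψ (g * h))) ∧
      (∀ (b g h : G), b ∈ B → f' (b * g) h = f' g h) ∧
      (∀ (b g h : G), b ∈ B → f' g (b * h) = f' g h) := by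
  obtain ⟨β, hβ⟩ := exists_beta (F := F) hprod hcomm hB
  have Bcen : ∀ b ∈ B, ∀ g : G, b * g = g * b := fun b hb g =>
    B_central_G hprod hcomm hB hb g
  have bpmem : ∀ g : G, g * ((QuotientGroup.mk g : G ⧸ B)).out⁻¹ ∈ B := by
    intro g
    have h1 : (QuotientGroup.mk g : G ⧸ B)
        = QuotientGroup.mk ((QuotientGroup.mk g : G ⧸ B)).out :=
      (QuotientGroup.out_eq' _).symm
    have h2 : g⁻¹ * ((QuotientGroup.mk g : G ⧸ B)).out ∈ B := QuotientGroup.eq.mp h1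
    have h3 := ‹B.Normal›.conj_mem _ (B.inv_mem h2) g
    have h4 : g * (g⁻¹ * ((QuotientGroup.mk g : G ⧸ B)).out)⁻¹ * g⁻¹
        = g * ((QuotientGroup.mk g : G ⧸ B)).out⁻¹ := by group
    rwa [h4] at h3
  set bp : G → ↥B := fun g => ⟨g * ((QuotientGroup.mk g : G ⧸ B)).out⁻¹, bpmem g⟩ with hbp
  set s : ↥B → Ext F := fun b => ⟨β b, ↑b⟩ with hs
  set t : G → Ext F := fun g => s (bp g) * ⟨0, ((QuotientGroup.mk g : G ⧸ B)).out⟩ with ht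
  set φ : G → D := fun g => (t g).val with hφ
  set f' : G → G → D := fun g h => F.1 g h + (φ g + φ h - φ (g * h)) - F.1 1 1 with hf'
  have s_mul : ∀ b b' : ↥B, s (b * b') = s b * s b' := by
    intro b b'
    ext
    · show β (b * b') = β b + β b' + F.1 ↑b ↑b' - F.1 1 1
      exact hβ b b'
    · rfl
  have s_cent : ∀ (b : ↥B) (y : Ext F), s b * y = y * s b := fun b y =>
    lift_central hprod hcomm hB (s b) b.2 y
  have t_elm : ∀ g, (t g).elm = g := by
    intro g
    show (g * ((QuotientGroup.mk g : G ⧸ B)).out⁻¹) * ((QuotientGroup.mk g : G ⧸ B)).out = g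
    exact inv_mul_cancel_right g _
  have t_mul : ∀ g h, t g * t h = (⟨f' g h, 1⟩ : Ext F) * t (g * h) := by
    intro g h
    ext
    · show (t g).val + (t h).val + F.1 (t g).elm (t h).elm - F.1 1 1
        = f' g h + (t (g * h)).val + F.1 1 (t (g * h)).elm - F.1 1 1
      rw [t_elm, t_elm, t_elm, coc_one_left F (g * h), hf']
      show (t g).val + (t h).val + F.1 g h - F.1 1 1
        = F.1 g h + (φ g + φ h - φ (g * h)) - F.1 1 1 + φ (g * h) + F.1 1 1 - F.1 1 1
      rw [show φ g = (t g).val from rfl, show φ h = (t h).val from rfl]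
      abel
    · show (t g).elm * (t h).elm = 1 * (t (g * h)).elm
      rw [t_elm, t_elm, t_elm, one_mul]
  have fprime_eq : ∀ g h, (⟨f' g h, 1⟩ : Ext F) = t g * t h * (t (g * h))⁻¹ := by
    intro g h
    rw [t_mul g h, mul_inv_cancel_right]
  have t_b : ∀ (b : ↥B) (g : G), t (↑b * g) = s b * t g := by
    intro b g
    have hmk : (QuotientGroup.mk (↑b * g) : G ⧸ B) = QuotientGroup.mk g := by
      have : (QuotientGroup.mk (↑b : G) : G ⧸ B) = 1 := (QuotientGroup.eq_one_iff _).mpr b.2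
      rw [QuotientGroup.mk_mul, this, one_mul]
    have hbp2 : bp (↑b * g) = b * bp g := by
      apply Subtype.ext
      show (↑b * g) * ((QuotientGroup.mk (↑b * g) : G ⧸ B)).out⁻¹
          = ↑b * (g * ((QuotientGroup.mk g : G ⧸ B)).out⁻¹)
      rw [hmk, mul_assoc]
    show s (bp (↑b * g)) * ⟨0, ((QuotientGroup.mk (↑b * g) : G ⧸ B)).out⟩
        = s b * (s (bp g) * ⟨0, ((QuotientGroup.mk g : G ⧸ B)).out⟩)
    rw [hbp2, hmk, s_mul, mul_assoc]
  have f'_left : ∀ (b : ↥B) (g h : G), f' (↑b * g) h = f' g h := by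
    intro b g h
    have h1 : (⟨f' (↑b * g) h, 1⟩ : Ext F) = ⟨f' g h, 1⟩ := by
      rw [fprime_eq, fprime_eq]
      have hassoc : (↑b * g) * h = (↑b : G) * (g * h) := mul_assoc _ _ _
      rw [t_b, hassoc, t_b]
      have h2 : (s b * t g) * t h * (s b * t (g * h))⁻¹
          = s b * (t g * t h * (t (g * h))⁻¹) * (s b)⁻¹ := by group
      rw [h2, conj_central (s_cent b)]
    exact congrArg Ext.val h1
  have f'_right : ∀ (b : ↥B) (g h : G), f' g (↑b * h) = f' g h := by
    intro b g h
    have hgb : g * (↑b * h) = (↑b : G) * (g * h) := by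
      rw [← mul_assoc, ← Bcen ↑b b.2 g, mul_assoc]
    have h1 : (⟨f' g (↑b * h), 1⟩ : Ext F) = ⟨f' g h, 1⟩ := by
      rw [fprime_eq, fprime_eq, t_b, hgb, t_b]
      have h2 : t g * (s b * t h) * (s b * t (g * h))⁻¹
          = s b * (t g * t h * (t (g * h))⁻¹) * (s b)⁻¹ := by
        rw [← mul_assoc (t g) (s b) (t h), ← s_cent b (t g)]
        group
      rw [h2, conj_central (s_cent b)]
    exact congrArg Ext.val h1
  refine ⟨f', fun g => φ g - F.1 1 1, ?_, ?_, ?_⟩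
  · intro g h
    rw [hf']
    show F.1 g h + (φ g + φ h - φ (g * h)) - F.1 1 1
      = F.1 g h + ((φ g - F.1 1 1) + (φ h - F.1 1 1) - (φ (g * h) - F.1 1 1))
    abel
  · intro b g h hb
    exact f'_left ⟨b, hb⟩ g h
  · intro b g h hb
    exact f'_right ⟨b, hb⟩ g h

end Invariant

section Transgression

variable {G : Type} [Group G] {D : Type} [AddCommGroup D] (B : Subgroup G) [B.Normal]

noncomputable def bpart (g : G) : ↥B :=
  ⟨g * ((QuotientGroup.mk g : G ⧸ B)).out⁻¹, by
    have h1 : (QuotientGroup.mk g : G ⧸ B)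
        = QuotientGroup.mk ((QuotientGroup.mk g : G ⧸ B)).out :=
      (QuotientGroup.out_eq' _).symm
    have h2 := QuotientGroup.eq.mp h1
    have h3 := (inferInstance : B.Normal).conj_mem _ (B.inv_mem h2) g
    have h4 : g * (g⁻¹ * ((QuotientGroup.mk g : G ⧸ B)).out)⁻¹ * g⁻¹
        = g * ((QuotientGroup.mk g : G ⧸ B)).out⁻¹ := by group
    rwa [h4] at h3⟩

theorem bpart_val (g : G) :
    (bpart B g : G) = g * ((QuotientGroup.mk g : G ⧸ B)).out⁻¹ := rfl

noncomputable def cElt (x y : G ⧸ B) : ↥B :=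
  ⟨x.out * y.out * ((x * y).out)⁻¹, by
    have e1 : (QuotientGroup.mk (x.out * y.out * ((x * y).out)⁻¹) : G ⧸ B) = 1 := by
      rw [QuotientGroup.mk_mul, QuotientGroup.mk_mul, QuotientGroup.mk_inv,
        QuotientGroup.out_eq', QuotientGroup.out_eq', QuotientGroup.out_eq',
        mul_inv_cancel]
    exact (QuotientGroup.eq_one_iff _).mp e1⟩

theorem cElt_val (x y : G ⧸ B) :
    (cElt B x y : G) = x.out * y.out * ((x * y).out)⁻¹ := rfl

/-- cocycle identity for `cElt` -/
theorem cElt_cocycle (hBc : ∀ b ∈ B, ∀ g : G, b * g = g * b) (x y z : G ⧸ B) :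
    cElt B x y * cElt B (x * y) z = cElt B y z * cElt B x (y * z) := by
  apply Subtype.ext
  show (x.out * y.out * ((x * y).out)⁻¹) * ((x * y).out * z.out * (((x * y) * z).out)⁻¹)
    = (y.out * z.out * ((y * z).out)⁻¹) * (x.out * (y * z).out * ((x * (y * z)).out)⁻¹)
  have hassoc : (x * y) * z = x * (y * z) := mul_assoc x y z
  rw [hassoc]
  have hp : ∀ w : G, (y.out * z.out * ((y * z).out)⁻¹) * w
      = w * (y.out * z.out * ((y * z).out)⁻¹) :=
    fun w => hBc _ (cElt B y z).2 w
  calc (x.out * y.out * ((x * y).out)⁻¹) * ((x * y).out * z.out * ((x * (y * z)).out)⁻¹)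
      = x.out * (y.out * z.out) * ((x * (y * z)).out)⁻¹ := by group
    _ = (x.out * ((y.out * z.out * ((y * z).out)⁻¹) * (y*z).out)) * ((x * (y * z)).out)⁻¹ := by
        group
    _ = (x.out * ((y*z).out * (y.out * z.out * ((y * z).out)⁻¹))) * ((x * (y * z)).out)⁻¹ := by
        rw [hp ((y*z).out)]
    _ = ((x.out * (y * z).out) * (y.out * z.out * ((y * z).out)⁻¹)) * ((x * (y * z)).out)⁻¹ := by
        group
    _ = ((y.out * z.out * ((y * z).out)⁻¹) * (x.out * (y * z).out)) * ((x * (y * z)).out)⁻¹ := by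
        rw [← hp (x.out * (y * z).out)]
    _ = (y.out * z.out * ((y * z).out)⁻¹) * (x.out * (y * z).out * ((x * (y * z)).out)⁻¹) := by
        group

/-- key identity relating `cElt` and `bpart` -/
theorem cElt_bpart (hBc : ∀ b ∈ B, ∀ g : G, b * g = g * b) (g h : G) :
    cElt B (QuotientGroup.mk g) (QuotientGroup.mk h) * bpart B g * bpart B h
      = bpart B (g * h) := by
  apply Subtype.ext
  have hmk : (QuotientGroup.mk g : G ⧸ B) * QuotientGroup.mk h = QuotientGroup.mk (g * h) := by
    rw [QuotientGroup.mk_mul]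
  show ((QuotientGroup.mk g : G ⧸ B).out * (QuotientGroup.mk h : G ⧸ B).out
      * (((QuotientGroup.mk g : G ⧸ B) * QuotientGroup.mk h).out)⁻¹)
      * (g * ((QuotientGroup.mk g : G ⧸ B)).out⁻¹) * (h * ((QuotientGroup.mk h : G ⧸ B)).out⁻¹)
    = (g * h) * ((QuotientGroup.mk (g * h) : G ⧸ B)).out⁻¹
  rw [hmk]
  set og := ((QuotientGroup.mk g : G ⧸ B)).out
  set oh := ((QuotientGroup.mk h : G ⧸ B)).out
  set ogh := ((QuotientGroup.mk (g * h) : G ⧸ B)).out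
  have ha : ∀ w : G, (g * og⁻¹) * w = w * (g * og⁻¹) := fun w => hBc _ (bpart B g).2 w
  have hb : ∀ w : G, (h * oh⁻¹) * w = w * (h * oh⁻¹) := fun w => hBc _ (bpart B h).2 w
  calc (og * oh * ogh⁻¹) * (g * og⁻¹) * (h * oh⁻¹)
      = ((og * oh * ogh⁻¹) * (g * og⁻¹)) * (h * oh⁻¹) := by group
    _ = ((g * og⁻¹) * (og * oh * ogh⁻¹)) * (h * oh⁻¹) := by rw [← ha (og * oh * ogh⁻¹)]
    _ = g * oh * (ogh⁻¹ * (h * oh⁻¹)) := by group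
    _ = g * oh * ((h * oh⁻¹) * ogh⁻¹) := by rw [hb ogh⁻¹]
    _ = g * (oh * (h * oh⁻¹)) * ogh⁻¹ := by group
    _ = g * ((h * oh⁻¹) * oh) * ogh⁻¹ := by rw [hb oh]
    _ = (g * h) * ogh⁻¹ := by group

end Transgression


theorem H2Map_mk {G : Type} [Group G] {D : Type} [AddCommGroup D]
    {G' : Type} [Group G'] (π : G' →* G) (f : cocycles2 G D) :
    H2Map (D := D) π (H2mk f) = H2mk (pullCocycle π f) := by
  unfold H2Map
  exact QuotientAddGroup.map_mk _ _ _ _ _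

/-- **Theorem A.** If `B ≤ Z = ⁅H,H⁆ ⊓ ⁅K,K⁆`, then the inflation map
`H²(G/B, D) → H²(G, D)` is surjective, its kernel `N` is isomorphic to `Hom(B, D)`,
and consequently `H²(G, D) ≅ H²(G/B, D)/N`. -/
theorem theoremA {G : Type} [Group G] (H K : Subgroup G) [H.Normal] [K.Normal]
    (hprod : H ⊔ K = ⊤) (hcomm : ∀ h ∈ H, ∀ k ∈ K, Commute h k)
    (D : Type) [AddCommGroup D] [DivisibleBy D ℤ]
    (B : Subgroup G) [B.Normal] (hB : B ≤ ⁅H, H⁆ ⊓ ⁅K, K⁆) :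
    Function.Surjective (H2Map (QuotientGroup.mk' B) : H2 (G ⧸ B) D →+ H2 G D) ∧
    Nonempty (↥(AddMonoidHom.ker (H2Map (QuotientGroup.mk' B) : H2 (G ⧸ B) D →+ H2 G D)) ≃+
      (Additive ↥B →+ D)) ∧
    Nonempty (H2 G D ≃+
      (H2 (G ⧸ B) D ⧸ AddMonoidHom.ker (H2Map (QuotientGroup.mk' B) : H2 (G ⧸ B) D →+ H2 G D))) := by
  classical
  have hBc : ∀ b ∈ B, ∀ g : G, b * g = g * b := fun b hb g =>
    B_central_G hprod hcomm hB hb g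
  -- Surjectivity of inflation
  have hsurj : Function.Surjective (H2Map (QuotientGroup.mk' B) : H2 (G ⧸ B) D →+ H2 G D) := by
    intro q
    refine QuotientAddGroup.induction_on q (fun F => ?_)
    obtain ⟨f', ψ, hψ, hleft, hright⟩ := exists_invariant (F := F) hprod hcomm hB
    have hf'coc : f' ∈ cocycles2 G D := by
      intro g h k
      have hc := coc F g h k
      calc f' g h + f' (g * h) k
          = (F.1 g h + F.1 (g * h) k)
            + (ψ g + ψ h + ψ k - ψ (g * (h * k))) := by
            rw [hψ, hψ, mul_assoc]; abel
        _ = (F.1 h k + F.1 g (h * k))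
            + (ψ g + ψ h + ψ k - ψ (g * (h * k))) := by rw [hc]
        _ = f' h k + f' g (h * k) := by rw [hψ, hψ]; abel
    have hcongr : ∀ g₁ g₂ h₁ h₂ : G, (QuotientGroup.mk g₁ : G ⧸ B) = QuotientGroup.mk g₂ →
        (QuotientGroup.mk h₁ : G ⧸ B) = QuotientGroup.mk h₂ → f' g₁ h₁ = f' g₂ h₂ := by
      intro g₁ g₂ h₁ h₂ hg hh
      have hg' : g₂ * g₁⁻¹ ∈ B := by
        have h2 := QuotientGroup.eq.mp hg
        have h3 := ‹B.Normal›.conj_mem _ h2 g₁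
        have h4 : g₁ * (g₁⁻¹ * g₂) * g₁⁻¹ = g₂ * g₁⁻¹ := by group
        rwa [h4] at h3
      have hh' : h₂ * h₁⁻¹ ∈ B := by
        have h2 := QuotientGroup.eq.mp hh
        have h3 := ‹B.Normal›.conj_mem _ h2 h₁
        have h4 : h₁ * (h₁⁻¹ * h₂) * h₁⁻¹ = h₂ * h₁⁻¹ := by group
        rwa [h4] at h3
      have e1 : g₂ = (g₂ * g₁⁻¹) * g₁ := by group
      have e2 : h₂ = (h₂ * h₁⁻¹) * h₁ := by group
      rw [e1, e2, hleft _ _ _ hg', hright _ _ _ hh']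
    have hFbarmem : (fun x y : G ⧸ B => f' x.out y.out) ∈ cocycles2 (G ⧸ B) D := by
      intro x y z
      have e1 : f' ((x * y).out) z.out = f' (x.out * y.out) z.out := by
        refine hcongr _ _ _ _ ?_ rfl
        rw [QuotientGroup.out_eq', QuotientGroup.mk_mul, QuotientGroup.out_eq',
          QuotientGroup.out_eq']
      have e2 : f' x.out ((y * z).out) = f' x.out (y.out * z.out) := by
        refine hcongr _ _ _ _ rfl ?_
        rw [QuotientGroup.out_eq', QuotientGroup.mk_mul, QuotientGroup.out_eq',
          QuotientGroup.out_eq']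
      show f' x.out y.out + f' ((x * y).out) z.out
        = f' y.out z.out + f' x.out ((y * z).out)
      rw [e1, e2]
      exact hf'coc x.out y.out z.out
    refine ⟨H2mk ⟨fun x y => f' x.out y.out, hFbarmem⟩, ?_⟩
    rw [H2Map_mk]
    refine QuotientAddGroup.eq.mpr ?_
    rw [AddSubgroup.mem_addSubgroupOf]
    refine ⟨fun g => -ψ g, ?_⟩
    intro g h
    show -(f' ((QuotientGroup.mk g : G ⧸ B)).out ((QuotientGroup.mk h : G ⧸ B)).out)
        + F.1 g h
      = -ψ g + -ψ h - -ψ (g * h)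
    rw [hcongr _ _ _ _ (QuotientGroup.out_eq' _) (QuotientGroup.out_eq' _), hψ g h]
    abel
  -- The transgression
  have hτmem : ∀ χ : Additive ↥B →+ D,
      (fun x y : G ⧸ B => χ (Additive.ofMul (cElt B x y))) ∈ cocycles2 (G ⧸ B) D := by
    intro χ x y z
    have h1 := congrArg (fun b : ↥B => χ (Additive.ofMul b)) (cElt_cocycle B hBc x y z)
    simp only [ofMul_mul, map_add] at h1
    exact h1
  set τ : (Additive ↥B →+ D) → H2 (G ⧸ B) D :=
    fun χ => H2mk ⟨fun x y => χ (Additive.ofMul (cElt B x y)), hτmem χ⟩ with hτ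
  have hτadd : ∀ χ χ', τ (χ + χ') = τ χ + τ χ' := by
    intro χ χ'
    rw [hτ]
    show QuotientAddGroup.mk _ = QuotientAddGroup.mk _ + QuotientAddGroup.mk _
    refine Eq.trans ?_ (QuotientAddGroup.mk_add _ _ _).symm
    rfl
  have hτker : ∀ χ, H2Map (QuotientGroup.mk' B) (τ χ) = 0 := by
    intro χ
    rw [hτ, H2Map_mk]
    refine (QuotientAddGroup.eq_zero_iff _).mpr ?_
    rw [AddSubgroup.mem_addSubgroupOf]
    refine ⟨fun g => -χ (Additive.ofMul (bpart B g)), ?_⟩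
    intro g h
    have h2 := congrArg (fun b : ↥B => χ (Additive.ofMul b)) (cElt_bpart B hBc g h)
    simp only [ofMul_mul, map_add] at h2
    show χ (Additive.ofMul (cElt B (QuotientGroup.mk g) (QuotientGroup.mk h)))
      = -χ (Additive.ofMul (bpart B g)) + -χ (Additive.ofMul (bpart B h))
        - -χ (Additive.ofMul (bpart B (g * h)))
    rw [← h2]; abel
  set e : (Additive ↥B →+ D) →+
      ↥(AddMonoidHom.ker (H2Map (QuotientGroup.mk' B) : H2 (G ⧸ B) D →+ H2 G D)) :=
    AddMonoidHom.mk' (fun χ => ⟨τ χ, hτker χ⟩)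
      (fun χ χ' => Subtype.ext (hτadd χ χ')) with he
  -- injectivity
  have hinj : Function.Injective e := by
    rw [injective_iff_map_eq_zero]
    intro χ hχ
    have hτ0 : τ χ = 0 := congrArg Subtype.val hχ
    rw [hτ] at hτ0
    obtain ⟨ψq, hψq⟩ := AddSubgroup.mem_addSubgroupOf.mp
      ((QuotientAddGroup.eq_zero_iff _).mp hτ0)
    -- hψq : ∀ x y, χ (ofMul (cElt B x y)) = ψq x + ψq y - ψq (x * y)
    set Φ : G → D := fun g => χ (Additive.ofMul (bpart B g))
      + ψq (QuotientGroup.mk g) with hΦ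
    have hΦadd : ∀ g h : G, Φ (g * h) = Φ g + Φ h := by
      intro g h
      have h2 := congrArg (fun b : ↥B => χ (Additive.ofMul b)) (cElt_bpart B hBc g h)
      simp only [ofMul_mul, map_add] at h2
      have h3 : χ (Additive.ofMul (cElt B (QuotientGroup.mk g) (QuotientGroup.mk h)))
          = ψq (QuotientGroup.mk g) + ψq (QuotientGroup.mk h)
            - ψq (QuotientGroup.mk g * QuotientGroup.mk h) := hψq _ _
      have h3' : ψq (QuotientGroup.mk g * QuotientGroup.mk h)
          = ψq (QuotientGroup.mk g) + ψq (QuotientGroup.mk h)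
            - χ (Additive.ofMul (cElt B (QuotientGroup.mk g) (QuotientGroup.mk h))) := by
        rw [eq_sub_iff_add_eq, h3]; abel
      rw [hΦ]
      show χ (Additive.ofMul (bpart B (g * h))) + ψq (QuotientGroup.mk (g * h))
        = (χ (Additive.ofMul (bpart B g)) + ψq (QuotientGroup.mk g))
          + (χ (Additive.ofMul (bpart B h)) + ψq (QuotientGroup.mk h))
      rw [← h2, QuotientGroup.mk_mul, h3']
      abel
    set Φ' : G →* Multiplicative D :=
      MonoidHom.mk' (fun g => Multiplicative.ofAdd (Φ g))
        (fun g h => congrArg Multiplicative.ofAdd (hΦadd g h)) with hΦ'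
    have hΦ1 : Φ 1 = 0 := by
      have := hΦadd 1 1
      rw [one_mul] at this
      exact (left_eq_add.mp this)
    have hcommker : ⁅H, H⁆ ≤ Φ'.ker := by
      rw [Subgroup.commutator_le]
      intro g₁ _ g₂ _
      rw [MonoidHom.mem_ker, map_commutatorElement]
      exact commutatorElement_eq_one_iff_commute.mpr (Commute.all _ _)
    ext b
    have hbB : ((Additive.toMul b : ↥B) : G) ∈ B := (Additive.toMul b).2
    have hmkb : (QuotientGroup.mk ((Additive.toMul b : ↥B) : G) : G ⧸ B) = 1 :=
      (QuotientGroup.eq_one_iff _).mpr hbB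
    have hΦb : Φ ((Additive.toMul b : ↥B) : G) = 0 := by
      have h0 : Φ' ((Additive.toMul b : ↥B) : G) = 1 := hcommker ((hB hbB).1)
      exact congrArg Multiplicative.toAdd h0
    -- compute Φ b and Φ 1 in terms of χ
    have houtB : ((1 : G ⧸ B)).out ∈ B := by
      have := QuotientGroup.out_eq' (1 : G ⧸ B)
      exact (QuotientGroup.eq_one_iff _).mp this
    have hbp_b : bpart B ((Additive.toMul b : ↥B) : G)
        = Additive.toMul b * (⟨((1 : G ⧸ B)).out, houtB⟩ : ↥B)⁻¹ := by
      apply Subtype.ext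
      show ((Additive.toMul b : ↥B) : G)
          * ((QuotientGroup.mk ((Additive.toMul b : ↥B) : G) : G ⧸ B)).out⁻¹
        = ((Additive.toMul b : ↥B) : G) * (((1 : G ⧸ B)).out)⁻¹
      rw [hmkb]
    have hbp_1 : bpart B (1 : G) = (⟨((1 : G ⧸ B)).out, houtB⟩ : ↥B)⁻¹ := by
      apply Subtype.ext
      show (1 : G) * ((QuotientGroup.mk (1 : G) : G ⧸ B)).out⁻¹
        = (((1 : G ⧸ B)).out)⁻¹
      rw [QuotientGroup.mk_one, one_mul]
    have hΦbval : Φ ((Additive.toMul b : ↥B) : G)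
        = χ b - χ (Additive.ofMul (⟨((1 : G ⧸ B)).out, houtB⟩ : ↥B)) + ψq 1 := by
      rw [hΦ]
      show χ (Additive.ofMul (bpart B ((Additive.toMul b : ↥B) : G)))
          + ψq (QuotientGroup.mk ((Additive.toMul b : ↥B) : G))
        = χ b - χ (Additive.ofMul (⟨((1 : G ⧸ B)).out, houtB⟩ : ↥B)) + ψq 1
      rw [hbp_b, hmkb]
      have : χ (Additive.ofMul (Additive.toMul b * (⟨((1 : G ⧸ B)).out, houtB⟩ : ↥B)⁻¹))
          = χ b + χ (Additive.ofMul (⟨((1 : G ⧸ B)).out, houtB⟩ : ↥B)⁻¹) := by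
        rw [ofMul_mul, map_add]
        rfl
      rw [this, ofMul_inv, map_neg]
      abel
    have hΦ1val : Φ (1 : G)
        = - χ (Additive.ofMul (⟨((1 : G ⧸ B)).out, houtB⟩ : ↥B)) + ψq 1 := by
      rw [hΦ]
      show χ (Additive.ofMul (bpart B (1 : G))) + ψq (QuotientGroup.mk (1 : G))
        = - χ (Additive.ofMul (⟨((1 : G ⧸ B)).out, houtB⟩ : ↥B)) + ψq 1
      rw [hbp_1, QuotientGroup.mk_one, ofMul_inv, map_neg]
    have : χ b = Φ ((Additive.toMul b : ↥B) : G) - Φ (1 : G) := by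
      rw [hΦbval, hΦ1val]; abel
    refine this.trans ?_
    rw [hΦb, hΦ1, sub_zero]
    rfl
  -- surjectivity onto the kernel
  have hesurj : Function.Surjective e := by
    rintro ⟨q, hq⟩
    revert hq
    refine QuotientAddGroup.induction_on q (fun Fb => ?_)
    intro hq
    change H2Map (QuotientGroup.mk' B) (H2mk Fb) = 0 at hq
    rw [H2Map_mk] at hq
    obtain ⟨φ, hφ⟩ := AddSubgroup.mem_addSubgroupOf.mp
      ((QuotientAddGroup.eq_zero_iff _).mp hq)
    -- hφ : ∀ g h : G, Fb.1 (mk g) (mk h) = φ g + φ h - φ (g * h)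
    have hφ' : ∀ g h : G,
        Fb.1 (QuotientGroup.mk g) (QuotientGroup.mk h) = φ g + φ h - φ (g * h) := hφ
    have hφ1 : φ 1 = Fb.1 1 1 := by
      have h1 := hφ' 1 1
      rw [one_mul, QuotientGroup.mk_one] at h1
      rw [h1]
      abel
    have hφB : ∀ b b' : G, b ∈ B → φ (b * b') = φ b + φ b' - φ 1 := by
      intro b b' hb
      have h1 := hφ' b b'
      rw [(QuotientGroup.eq_one_iff b).mpr hb, coc_one_left Fb, ← hφ1] at h1
      rw [eq_sub_iff_add_eq, h1]
      abel
    set χ : Additive ↥B →+ D :=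
      AddMonoidHom.mk' (fun b => φ 1 - φ ((Additive.toMul b : ↥B) : G))
        (by
          intro b b'
          show φ 1 - φ (((Additive.toMul b : ↥B) : G) * ((Additive.toMul b' : ↥B) : G))
            = (φ 1 - φ ((Additive.toMul b : ↥B) : G))
              + (φ 1 - φ ((Additive.toMul b' : ↥B) : G))
          rw [hφB _ _ (Additive.toMul b).2]
          abel) with hχ
    refine ⟨χ, Subtype.ext ?_⟩
    show τ χ = QuotientAddGroup.mk Fb
    rw [hτ]
    refine QuotientAddGroup.eq.mpr ?_
    rw [AddSubgroup.mem_addSubgroupOf]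
    refine ⟨fun x => φ x.out, ?_⟩
    intro x y
    have h1 : Fb.1 x y = φ x.out + φ y.out - φ (x.out * y.out) := by
      have := hφ' x.out y.out
      rwa [QuotientGroup.out_eq', QuotientGroup.out_eq'] at this
    have hdec : x.out * y.out = ↑(cElt B x y) * (x * y).out := by
      rw [cElt_val]; group
    have h2 : φ (↑(cElt B x y) * (x * y).out)
        = φ ↑(cElt B x y) + φ ((x * y).out) - φ 1 :=
      hφB _ _ (cElt B x y).2
    show -(χ (Additive.ofMul (cElt B x y))) + Fb.1 x y
      = φ x.out + φ y.out - φ ((x * y).out)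
    have hχc : χ (Additive.ofMul (cElt B x y)) = φ 1 - φ ↑(cElt B x y) := rfl
    rw [hχc, h1, hdec, h2]
    abel
  refine ⟨hsurj, ⟨(AddEquiv.ofBijective e ⟨hinj, hesurj⟩).symm⟩,
    ⟨(QuotientAddGroup.quotientKerEquivOfSurjective _ hsurj).symm⟩⟩


end SchurCP
end

section
/- For any central subgroup B of G contained in Z = [H,H] ∩ [K,K], the inflation homomorphism inf : H²(G/B, D) → H²(G, D) is surjective. -/
/-!
Setting (central products): `G` is a group with normal subgroups `H` and `K` such that
`G = HK` (i.e. `H ⊔ K = ⊤`) and `[H, K] = 1` (i.e. every element of `H` commutes with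
every element of `K`).  We set `A = H ⊓ K` and `Z = ⁅H,H⁆ ⊓ ⁅K,K⁆`; both are central
in `G`.  Coefficients are taken in a divisible abelian group `D`, regarded as a trivial
module.  Second cohomology `H2 X D` is realized concretely as (inhomogeneous)
2-cocycles modulo 2-coboundaries, and `Hom(X, D)` is realized as `Additive X →+ D`.
-/

open scoped TensorProduct

set_option maxHeartbeats 1000000
set_option synthInstance.maxHeartbeats 1000000
set_option synthInstance.maxSize 2000

namespace SchurCP

variable (G : Type) [Group G] (D : Type) [AddCommGroup D]

variable {G D}

section Aux

variable {X : Type} [Group X] {D' : Type} [AddCommGroup D']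

theorem cocycle_one_left {f : X → X → D'}
    (hf : ∀ g h k : X, f g h + f (g * h) k = f h k + f g (h * k))
    (h0 : f 1 1 = 0) (g : X) : f 1 g = 0 := by
  have h := hf 1 1 g
  rw [h0, one_mul, one_mul, zero_add, left_eq_add] at h
  exact h

theorem cocycle_one_right {f : X → X → D'}
    (hf : ∀ g h k : X, f g h + f (g * h) k = f h k + f g (h * k))
    (h0 : f 1 1 = 0) (g : X) : f g 1 = 0 := by
  have h := hf g 1 1
  rw [h0, mul_one, one_mul, zero_add, add_eq_right] at h
  exact h

theorem cocycle_inv {f : X → X → D'}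
    (hf : ∀ g h k : X, f g h + f (g * h) k = f h k + f g (h * k))
    (h0 : f 1 1 = 0) (g : X) : f g g⁻¹ = f g⁻¹ g := by
  have h := hf g g⁻¹ g
  rw [mul_inv_cancel, inv_mul_cancel, cocycle_one_left hf h0,
    cocycle_one_right hf h0, add_zero, add_zero] at h
  exact h

/-- The central extension of `X` by `D'` determined by a normalized 2-cocycle. -/
def extGroup (f : X → X → D')
    (hf : ∀ g h k : X, f g h + f (g * h) k = f h k + f g (h * k))
    (h0 : f 1 1 = 0) : Group (D' × X) :=
  letI : Mul (D' × X) := ⟨fun p q => (p.1 + q.1 + f p.2 q.2, p.2 * q.2)⟩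
  letI : One (D' × X) := ⟨(0, 1)⟩
  letI : Inv (D' × X) := ⟨fun p => (-p.1 - f p.2 p.2⁻¹, p.2⁻¹)⟩
  Group.ofLeftAxioms
    (fun a b c => by
      refine Prod.ext ?_ (mul_assoc a.2 b.2 c.2)
      show a.1 + b.1 + f a.2 b.2 + c.1 + f (a.2 * b.2) c.2
        = a.1 + (b.1 + c.1 + f b.2 c.2) + f a.2 (b.2 * c.2)
      rw [eq_sub_of_add_eq' (hf a.2 b.2 c.2).symm]
      abel)
    (fun a => by
      refine Prod.ext ?_ (one_mul a.2)
      show 0 + a.1 + f 1 a.2 = a.1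
      rw [cocycle_one_left hf h0, add_zero, zero_add])
    (fun a => by
      refine Prod.ext ?_ (inv_mul_cancel a.2)
      show -a.1 - f a.2 a.2⁻¹ + a.1 + f a.2⁻¹ a.2 = 0
      rw [← cocycle_inv hf h0]
      abel)

open scoped commutatorElement in
theorem cocycle_central_symm {G : Type} [Group G]
    (H K : Subgroup G) [K.Normal] (hprod : H ⊔ K = ⊤)
    (hcomm : ∀ h ∈ H, ∀ k ∈ K, Commute h k)
    (f : G → G → D')
    (hf : ∀ g h k : G, f g h + f (g * h) k = f h k + f g (h * k))
    (h0 : f 1 1 = 0)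
    {b : G} (hb : b ∈ ⁅H, H⁆ ⊓ ⁅K, K⁆) (g : G) : f b g = f g b := by
  letI : Group (D' × G) := extGroup f hf h0
  let π : (D' × G) →* G := { toFun := Prod.snd, map_one' := rfl, map_mul' := fun _ _ => rfl }
  have hπs : Function.Surjective π := fun g => ⟨(0, g), rfl⟩
  have hker : ∀ p : D' × G, p.2 = 1 → ∀ q : D' × G, p * q = q * p := by
    rintro ⟨d, x⟩ hx q
    dsimp only at hx
    subst hx
    refine Prod.ext ?_ ?_
    · show d + q.1 + f 1 q.2 = q.1 + d + f q.2 1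
      rw [cocycle_one_left hf h0, cocycle_one_right hf h0, add_zero, add_zero, add_comm]
    · show 1 * q.2 = q.2 * 1
      rw [one_mul, mul_one]
  have hcen : ⁅H.comap π, K.comap π⁆ ≤ Subgroup.center (D' × G) := by
    rw [Subgroup.commutator_le]
    intro p hp q hq
    rw [Subgroup.mem_center_iff]
    intro r
    refine (hker ⁅p, q⁆ ?_ r).symm
    show π ⁅p, q⁆ = 1
    rw [map_commutatorElement]
    exact commutatorElement_eq_one_iff_commute.mpr (hcomm _ hp _ hq)
  have c1 : ⁅⁅H.comap π, K.comap π⁆, H.comap π⁆ = ⊥ := by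
    rw [Subgroup.commutator_eq_bot_iff_le_centralizer]
    exact hcen.trans (Subgroup.center_le_centralizer _)
  have c2 : ⁅⁅H.comap π, K.comap π⁆, K.comap π⁆ = ⊥ := by
    rw [Subgroup.commutator_eq_bot_iff_le_centralizer]
    exact hcen.trans (Subgroup.center_le_centralizer _)
  have c1' : ⁅⁅K.comap π, H.comap π⁆, H.comap π⁆ = ⊥ := by
    rw [Subgroup.commutator_comm (K.comap π) (H.comap π)]; exact c1
  have c2' : ⁅⁅K.comap π, H.comap π⁆, K.comap π⁆ = ⊥ := by
    rw [Subgroup.commutator_comm (K.comap π) (H.comap π)]; exact c2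
  have hHHK : ⁅⁅H.comap π, H.comap π⁆, K.comap π⁆ = ⊥ :=
    Subgroup.commutator_commutator_eq_bot_of_rotate c1 c1'
  have hKKH : ⁅⁅K.comap π, K.comap π⁆, H.comap π⁆ = ⊥ :=
    Subgroup.commutator_commutator_eq_bot_of_rotate c2' c2
  have hmapH : Subgroup.map π ⁅H.comap π, H.comap π⁆ = ⁅H, H⁆ := by
    rw [Subgroup.map_commutator, Subgroup.map_comap_eq_self_of_surjective hπs]
  have hmapK : Subgroup.map π ⁅K.comap π, K.comap π⁆ = ⁅K, K⁆ := by
    rw [Subgroup.map_commutator, Subgroup.map_comap_eq_self_of_surjective hπs]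
  obtain ⟨p, hpmem, hpπ⟩ : ∃ p ∈ ⁅H.comap π, H.comap π⁆, π p = b := by
    have : b ∈ Subgroup.map π ⁅H.comap π, H.comap π⁆ := hmapH ▸ hb.1
    simpa [Subgroup.mem_map] using this
  obtain ⟨q, hqmem, hqπ⟩ : ∃ q ∈ ⁅K.comap π, K.comap π⁆, π q = b := by
    have : b ∈ Subgroup.map π ⁅K.comap π, K.comap π⁆ := hmapK ▸ hb.2
    simpa [Subgroup.mem_map] using this
  have hpK : ∀ r ∈ K.comap π, p * r = r * p := by
    intro r hr
    have := Subgroup.commutator_le.mp hHHK.le p hpmem r hr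
    rw [Subgroup.mem_bot] at this
    exact (commutatorElement_eq_one_iff_commute.mp this).eq
  have hqH : ∀ r ∈ H.comap π, q * r = r * q := by
    intro r hr
    have := Subgroup.commutator_le.mp hKKH.le q hqmem r hr
    rw [Subgroup.mem_bot] at this
    exact (commutatorElement_eq_one_iff_commute.mp this).eq
  have hcq : ∀ r : D' × G, (p * q⁻¹) * r = r * (p * q⁻¹) := by
    intro r
    refine hker _ ?_ r
    have : π (p * q⁻¹) = 1 := by rw [map_mul, map_inv, hpπ, hqπ, mul_inv_cancel]
    exact this
  have hpcen : ∀ e : D' × G, p * e = e * p := by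
    intro e
    have hmem : e.2 ∈ (↑(H ⊔ K) : Set G) := by
      rw [hprod]; exact Subgroup.mem_top e.2
    rw [Subgroup.mul_normal H K] at hmem
    obtain ⟨h', hh', k', hk', hhk⟩ := hmem
    have hx : ((e.1, h') : D' × G) ∈ H.comap π := hh'
    have hy : (((e.1, h') : D' × G))⁻¹ * e ∈ K.comap π := by
      have : π ((((e.1, h') : D' × G))⁻¹ * e) = h'⁻¹ * e.2 := by
        rw [map_mul, map_inv]; rfl
      show π ((((e.1, h') : D' × G))⁻¹ * e) ∈ K
      rw [this, ← hhk, inv_mul_cancel_left]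
      exact hk'
    have hpx : p * ((e.1, h') : D' × G) = ((e.1, h') : D' × G) * p := by
      have h1 := hqH _ hx
      have h2 := hcq ((e.1, h') : D' × G)
      calc p * ((e.1, h') : D' × G)
          = (p * q⁻¹) * (q * ((e.1, h') : D' × G)) := by
            rw [mul_assoc, inv_mul_cancel_left]
        _ = (p * q⁻¹) * (((e.1, h') : D' × G) * q) := by rw [h1]
        _ = ((p * q⁻¹) * ((e.1, h') : D' × G)) * q := (mul_assoc _ _ _).symm
        _ = (((e.1, h') : D' × G) * (p * q⁻¹)) * q := by rw [h2]
        _ = ((e.1, h') : D' × G) * ((p * q⁻¹) * q) := mul_assoc _ _ _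
        _ = ((e.1, h') : D' × G) * p := by rw [inv_mul_cancel_right]
    have hpy := hpK _ hy
    calc p * e = p * (((e.1, h') : D' × G) * ((((e.1, h') : D' × G))⁻¹ * e)) := by
          rw [mul_inv_cancel_left]
      _ = (p * ((e.1, h') : D' × G)) * ((((e.1, h') : D' × G))⁻¹ * e) := (mul_assoc _ _ _).symm
      _ = (((e.1, h') : D' × G) * p) * ((((e.1, h') : D' × G))⁻¹ * e) := by rw [hpx]
      _ = ((e.1, h') : D' × G) * (p * ((((e.1, h') : D' × G))⁻¹ * e)) := mul_assoc _ _ _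
      _ = ((e.1, h') : D' × G) * (((((e.1, h') : D' × G))⁻¹ * e) * p) := by rw [hpy]
      _ = (((e.1, h') : D' × G) * ((((e.1, h') : D' × G))⁻¹ * e)) * p := (mul_assoc _ _ _).symm
      _ = e * p := by rw [mul_inv_cancel_left]
  obtain ⟨dp, b2⟩ := p
  have hb2 : b2 = b := hpπ
  have hfinal : dp + 0 + f b2 g = 0 + dp + f g b2 :=
    congrArg Prod.fst (hpcen (0, g))
  rw [hb2] at hfinal
  rw [add_zero, zero_add] at hfinal
  exact add_left_cancel hfinal

theorem exists_sigma {B : Type} [Group B] [DivisibleBy D' ℤ]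
    (fB : B → B → D')
    (hfB : ∀ g h k : B, fB g h + fB (g * h) k = fB h k + fB g (h * k))
    (h0 : fB 1 1 = 0)
    (hcB : ∀ a b : B, a * b = b * a)
    (hsB : ∀ a b : B, fB a b = fB b a) :
    ∃ σ : B → D', ∀ a b : B, σ (a * b) = σ a + σ b + fB a b := by
  letI grp : Group (D' × B) := extGroup fB hfB h0
  letI cgrp : CommGroup (D' × B) :=
    { grp with
      mul_comm := fun p q => by
        refine Prod.ext ?_ (hcB p.2 q.2)
        show p.1 + q.1 + fB p.2 q.2 = q.1 + p.1 + fB q.2 p.2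
        rw [hsB p.2 q.2, add_comm p.1 q.1] }
  let ι : D' →+ Additive (D' × B) :=
    { toFun := fun d => Additive.ofMul ((d, 1) : D' × B)
      map_zero' := rfl
      map_add' := by
        intro d e
        have : ((d, 1) : D' × B) * (e, 1) = (d + e, 1) := by
          refine Prod.ext ?_ (one_mul 1)
          show d + e + fB 1 1 = d + e
          rw [h0, add_zero]
        exact (congrArg Additive.ofMul this).symm }
  have hι : Function.Injective ι := by
    intro d e h
    exact congrArg (fun z : Additive (D' × B) => (Additive.toMul z).1) h
  obtain ⟨r, hr⟩ :=
    (Module.Baer.of_divisible D').extension_property_addMonoidHom ι hι (AddMonoidHom.id D')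
  have hrι : ∀ d : D', r (ι d) = d := fun d => DFunLike.congr_fun hr d
  refine ⟨fun b => - r (Additive.ofMul ((0, b) : D' × B)), ?_⟩
  intro a b
  have hkey : ((0, a) : D' × B) * (0, b) = ((fB a b, 1) : D' × B) * (0, a * b) := by
    refine Prod.ext ?_ ?_
    · show 0 + 0 + fB a b = fB a b + 0 + fB 1 (a * b)
      rw [cocycle_one_left hfB h0]
      abel
    · show a * b = 1 * (a * b)
      rw [one_mul]
  have h2 : r (Additive.ofMul ((0, a) : D' × B)) + r (Additive.ofMul ((0, b) : D' × B))
      = fB a b + r (Additive.ofMul ((0, a * b) : D' × B)) := by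
    have e1 : Additive.ofMul (((0, a) : D' × B) * (0, b))
        = Additive.ofMul ((0, a) : D' × B) + Additive.ofMul ((0, b) : D' × B) := rfl
    have e2 : Additive.ofMul (((fB a b, 1) : D' × B) * (0, a * b))
        = ι (fB a b) + Additive.ofMul ((0, a * b) : D' × B) := rfl
    have h3 := congrArg r (congrArg Additive.ofMul hkey)
    rw [e1, e2, map_add, map_add, hrι] at h3
    exact h3
  show -r (Additive.ofMul ((0, a * b) : D' × B))
      = -r (Additive.ofMul ((0, a) : D' × B)) + -r (Additive.ofMul ((0, b) : D' × B)) + fB a b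
  rw [eq_sub_of_add_eq' h2.symm]
  abel

end Aux

/-- For any central subgroup `B ≤ Z = ⁅H,H⁆ ⊓ ⁅K,K⁆` of the central product `G`,
the inflation homomorphism `H²(G/B, D) → H²(G, D)` is surjective. -/
theorem inflation_surjective {G : Type} [Group G] (H K : Subgroup G) [H.Normal] [K.Normal]
    (hprod : H ⊔ K = ⊤) (hcomm : ∀ h ∈ H, ∀ k ∈ K, Commute h k)
    (D : Type) [AddCommGroup D] [DivisibleBy D ℤ]
    (B : Subgroup G) [B.Normal] (hB : B ≤ ⁅H, H⁆ ⊓ ⁅K, K⁆) :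
    Function.Surjective (H2Map (QuotientGroup.mk' B) : H2 (G ⧸ B) D →+ H2 G D) := by
  intro x
  refine QuotientAddGroup.induction_on x ?_
  rintro ⟨fc, hfcmem⟩
  have hfc : ∀ g h k : G, fc g h + fc (g * h) k = fc h k + fc g (h * k) := hfcmem
  set c : D := fc 1 1 with hc
  let f : G → G → D := fun g h => fc g h - c
  have hfeq : ∀ g h : G, f g h = fc g h - c := fun _ _ => rfl
  have hf : ∀ g h k : G, f g h + f (g * h) k = f h k + f g (h * k) := by
    intro g h k
    rw [hfeq, hfeq, hfeq, hfeq, sub_add_sub_comm, sub_add_sub_comm, hfc g h k]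
  have h0 : f 1 1 = 0 := sub_self c
  have hBA : ∀ b ∈ B, b ∈ H ⊓ K := fun b hb => inf_commutator_le_inf H K (hB hb)
  have hBcen : ∀ b ∈ B, ∀ g : G, b * g = g * b := by
    intro b hb g
    have hbH : b ∈ H := (hBA b hb).1
    have hbK : b ∈ K := (hBA b hb).2
    have hmem : g ∈ (↑(H ⊔ K) : Set G) := by rw [hprod]; exact Subgroup.mem_top g
    rw [Subgroup.mul_normal H K] at hmem
    obtain ⟨h', hh', k', hk', rfl⟩ := hmem
    have h1 : h' * b = b * h' := (hcomm h' hh' b hbK).eq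
    have h2 : b * k' = k' * b := (hcomm b hbH k' hk').eq
    calc b * (h' * k') = (b * h') * k' := (mul_assoc _ _ _).symm
      _ = (h' * b) * k' := by rw [h1]
      _ = h' * (b * k') := mul_assoc _ _ _
      _ = h' * (k' * b) := by rw [h2]
      _ = (h' * k') * b := (mul_assoc _ _ _).symm
  have hsymB : ∀ b ∈ B, ∀ g : G, f b g = f g b := fun b hb g =>
    cocycle_central_symm H K hprod hcomm f hf h0 (hB hb) g
  obtain ⟨σ, hσ⟩ := exists_sigma (fun a b : ↥B => f ↑a ↑b)
    (fun a b c' => hf (↑a) (↑b) (↑c'))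
    h0
    (fun a b => Subtype.ext (hBcen ↑a a.2 ↑b))
    (fun a b => hsymB ↑a a.2 ↑b)
  have hβmem : ∀ g : G, ((QuotientGroup.mk g : G ⧸ B)).out⁻¹ * g ∈ B := fun g =>
    QuotientGroup.eq.mp (QuotientGroup.out_eq' (QuotientGroup.mk g))
  let β : G → ↥B := fun g => ⟨((QuotientGroup.mk g : G ⧸ B)).out⁻¹ * g, hβmem g⟩
  have hβval : ∀ g : G, (↑(β g) : G) = ((QuotientGroup.mk g : G ⧸ B)).out⁻¹ * g := fun _ => rfl
  let φ : G → D := fun g => σ (β g) + f ((QuotientGroup.mk g : G ⧸ B)).out ↑(β g)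
  have hφeq : ∀ g : G, φ g = σ (β g) + f ((QuotientGroup.mk g : G ⧸ B)).out ↑(β g) :=
    fun _ => rfl
  let f' : G → G → D := fun g h => f g h + (φ g + φ h - φ (g * h))
  have hf'eq : ∀ g h : G, f' g h = f g h + (φ g + φ h - φ (g * h)) := fun _ _ => rfl
  have hshift : ∀ (g : G) (b : ↥B), φ (g * ↑b) = φ g + σ b + f g ↑b := by
    intro g b
    have hmk : (QuotientGroup.mk (g * ↑b) : G ⧸ B) = QuotientGroup.mk g := by
      refine QuotientGroup.eq.mpr ?_
      rw [mul_inv_rev, mul_assoc, inv_mul_cancel, mul_one]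
      exact B.inv_mem b.2
    have hβs : β (g * ↑b) = β g * b := by
      apply Subtype.ext
      rw [Subgroup.coe_mul, hβval, hβval, hmk, mul_assoc]
    rw [hφeq, hφeq, hβs, hmk]
    simp only [hσ, Subgroup.coe_mul]
    have hout : ((QuotientGroup.mk g : G ⧸ B)).out * ↑(β g) = g := by
      rw [hβval, mul_inv_cancel_left]
    have hcc := hf ((QuotientGroup.mk g : G ⧸ B)).out ↑(β g) ↑b
    rw [hout] at hcc
    rw [eq_sub_of_add_eq' hcc.symm]
    abel
  have hI : ∀ (g h : G) (b c' : ↥B),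
      f (g * ↑b) (h * ↑c') + f g ↑b + f h ↑c'
        = f ↑b ↑c' + f (g * h) (↑b * ↑c') + f g h := by
    intro g h b c'
    have hbh : (↑b : G) * h = h * ↑b := hBcen ↑b b.2 h
    have h1 := hf g ↑b (h * ↑c')
    rw [show (↑b : G) * (h * ↑c') = h * (↑b * ↑c') by
      rw [← mul_assoc, hbh, mul_assoc]] at h1
    have h2 := hf ↑b h ↑c'
    rw [hsymB ↑b b.2 h, hbh] at h2
    have h3 := hf h ↑b ↑c'
    have h4 := hf g h (↑b * ↑c')
    rw [eq_sub_of_add_eq' h1, eq_sub_of_add_eq' h2.symm, eq_sub_of_add_eq' h3,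
      eq_sub_of_add_eq' h4]
    abel
  have hinv : ∀ (g h : G) (b c' : ↥B), f' (g * ↑b) (h * ↑c') = f' g h := by
    intro g h b c'
    have hbh : (↑b : G) * h = h * ↑b := hBcen ↑b b.2 h
    have hmulrw : (g * ↑b) * (h * ↑c') = (g * h) * ↑(b * c') := by
      rw [Subgroup.coe_mul, mul_assoc g (↑b) (h * ↑c'), ← mul_assoc (↑b) h ↑c', hbh,
        mul_assoc h (↑b) ↑c', ← mul_assoc g h (↑b * ↑c')]
    rw [hf'eq, hf'eq, hmulrw, hshift g b, hshift h c', hshift (g * h) (b * c')]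
    simp only [hσ, Subgroup.coe_mul]
    have hIi := hI g h b c'
    rw [eq_sub_of_add_eq (eq_sub_of_add_eq hIi)]
    abel
  have hf' : ∀ g h k : G, f' g h + f' (g * h) k = f' h k + f' g (h * k) := by
    intro g h k
    rw [hf'eq, hf'eq, hf'eq, hf'eq, mul_assoc g h k,
      eq_sub_of_add_eq' (hf g h k).symm]
    abel
  let F : G ⧸ B → G ⧸ B → D := fun x y => f' x.out y.out
  have hFmk : ∀ g h : G, F (QuotientGroup.mk g) (QuotientGroup.mk h) = f' g h := by
    intro g h
    obtain ⟨b, hbeq⟩ := QuotientGroup.mk_out_eq_mul B g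
    obtain ⟨c', hceq⟩ := QuotientGroup.mk_out_eq_mul B h
    show f' (QuotientGroup.mk g : G ⧸ B).out (QuotientGroup.mk h : G ⧸ B).out = f' g h
    rw [hbeq, hceq]
    exact hinv g h b c'
  have hFcoc : ∀ x y z : G ⧸ B, F x y + F (x * y) z = F y z + F x (y * z) := by
    intro x y z
    refine QuotientGroup.induction_on x fun g => ?_
    refine QuotientGroup.induction_on y fun h => ?_
    refine QuotientGroup.induction_on z fun k => ?_
    rw [← QuotientGroup.mk_mul, ← QuotientGroup.mk_mul, hFmk, hFmk, hFmk, hFmk]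
    exact hf' g h k
  refine ⟨H2mk ⟨F, hFcoc⟩, ?_⟩
  have hmapmk : H2Map (QuotientGroup.mk' B) (H2mk ⟨F, hFcoc⟩)
      = H2mk (pullCocycle (QuotientGroup.mk' B) ⟨F, hFcoc⟩) := rfl
  rw [hmapmk]
  refine QuotientAddGroup.eq.mpr ?_
  rw [AddSubgroup.mem_addSubgroupOf]
  refine ⟨fun g => c - φ g, ?_⟩
  intro g h
  show -(F (QuotientGroup.mk g) (QuotientGroup.mk h)) + fc g h
      = (c - φ g) + (c - φ h) - (c - φ (g * h))
  rw [hFmk, hf'eq, hfeq]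
  abel

end SchurCP
end

section
/- Let F be a group with normal subgroups R, S₁, S₂ and S such that F = S₁S₂, [S₁, S₂] ≤ R, R ≤ S ≤ ([S₁,S₁] ∩ [S₂,S₂])·R, and [F, S] ≤ R. Then [F, R] = R ∩ [F, S]. -/
/-!
Setting (central products): `G` is a group with normal subgroups `H` and `K` such that
`G = HK` (i.e. `H ⊔ K = ⊤`) and `[H, K] = 1` (i.e. every element of `H` commutes with
every element of `K`).  We set `A = H ⊓ K` and `Z = ⁅H,H⁆ ⊓ ⁅K,K⁆`; both are central
in `G`.  Coefficients are taken in a divisible abelian group `D`, regarded as a trivial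
module.  Second cohomology `H2 X D` is realized concretely as (inhomogeneous)
2-cocycles modulo 2-coboundaries, and `Hom(X, D)` is realized as `Additive X →+ D`.
-/

open scoped TensorProduct

set_option maxHeartbeats 1000000
set_option synthInstance.maxHeartbeats 1000000
set_option synthInstance.maxSize 2000

namespace SchurCP

variable (G : Type) [Group G] (D : Type) [AddCommGroup D]

variable {G D}

open scoped Pointwise
open scoped commutatorElement


/-- If all commutators `⁅a, y⁆` with `y ∈ K` are central, then `a` commutes with
every element of `⁅K, K⁆`. -/
theorem aux_comm {Q : Type} [Group Q] (a : Q) (K : Subgroup Q)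
    (h : ∀ y ∈ K, ⁅a, y⁆ ∈ Subgroup.center Q) :
    ∀ d ∈ ⁅K, K⁆, ⁅a, d⁆ = 1 := by
  have hmul : ∀ y ∈ K, ∀ z ∈ K, ⁅a, y * z⁆ = ⁅a, y⁆ * ⁅a, z⁆ := by
    intro y hy z hz
    have hzc := (Subgroup.mem_center_iff.mp (h z hz)) y
    have : ⁅a, y * z⁆ = ⁅a, y⁆ * (y * ⁅a, z⁆ * y⁻¹) := by
      simp only [commutatorElement_def]; group
    rw [this, hzc]; group
  -- the map y ↦ ⁅a, y⁆ on K is a hom into the center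
  let ψ : K →* Subgroup.center Q :=
    { toFun := fun y => ⟨⁅a, (y : Q)⁆, h y y.2⟩
      map_one' := by ext; simp
      map_mul' := fun y z => by
        ext
        exact hmul y y.2 z z.2 }
  have key : ⁅K, K⁆ ≤ Subgroup.centralizer {a} := by
    rw [Subgroup.commutator_le]
    intro y hy z hz
    have hψ : ψ ⁅(⟨y, hy⟩ : K), (⟨z, hz⟩ : K)⁆ = 1 := by
      rw [map_commutatorElement]
      exact commutatorElement_eq_one_iff_commute.mpr (Subtype.ext (Subgroup.mem_center_iff.mp (ψ ⟨z, hz⟩).2 _))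
    have hval : ⁅a, ⁅y, z⁆⁆ = 1 := congrArg Subtype.val hψ
    have hc : Commute a ⁅y, z⁆ := commutatorElement_eq_one_iff_commute.mp hval
    exact Subgroup.mem_centralizer_iff.mpr (fun g hg => by
      rw [Set.mem_singleton_iff] at hg; subst hg; exact hc.eq)
  intro d hd
  exact commutatorElement_eq_one_iff_commute.mpr
    (Subgroup.mem_centralizer_iff.mp (key hd) a rfl)


theorem comm_mul_central {Q : Type} [Group Q] (x c z : Q)
    (hz : z ∈ Subgroup.center Q) : ⁅x, c * z⁆ = ⁅x, c⁆ := by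
  have h1 := Subgroup.mem_center_iff.mp hz
  simp only [commutatorElement_def, mul_inv_rev]
  calc x * (c * z) * x⁻¹ * (z⁻¹ * c⁻¹)
      = x * c * (z * x⁻¹ * z⁻¹) * c⁻¹ := by group
    _ = x * c * (x⁻¹ * z * z⁻¹) * c⁻¹ := by rw [← h1 x⁻¹]
    _ = x * c * x⁻¹ * c⁻¹ := by group


/-- If `F = S₁S₂` with `R, S₁, S₂, S` normal, `[S₁,S₂] ≤ R`,
`R ≤ S ≤ ([S₁,S₁] ∩ [S₂,S₂])·R` and `[F,S] ≤ R`, then `[F,R] = R ∩ [F,S]`. -/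
theorem commutator_eq_inf_commutator {F : Type} [Group F] (R S₁ S₂ S : Subgroup F)
    [R.Normal] [S₁.Normal] [S₂.Normal] [S.Normal]
    (hF : S₁ ⊔ S₂ = ⊤)
    (h12 : ⁅S₁, S₂⁆ ≤ R)
    (hRS : R ≤ S)
    (hS : S ≤ (⁅S₁, S₁⁆ ⊓ ⁅S₂, S₂⁆) ⊔ R)
    (hFS : ⁅(⊤ : Subgroup F), S⁆ ≤ R) :
    ⁅(⊤ : Subgroup F), R⁆ = R ⊓ ⁅(⊤ : Subgroup F), S⁆ := by
  set N := ⁅(⊤ : Subgroup F), R⁆ with hN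
  haveI : N.Normal := Subgroup.commutator_normal ⊤ R
  set π := QuotientGroup.mk' N with hπ
  have rcent : ∀ r ∈ R, π r ∈ Subgroup.center (F ⧸ N) := by
    intro r hr
    rw [Subgroup.mem_center_iff]
    intro q
    obtain ⟨g, rfl⟩ := QuotientGroup.mk'_surjective N q
    have h1 : ⁅π g, π r⁆ = 1 := by
      rw [← map_commutatorElement]
      exact (QuotientGroup.eq_one_iff _).mpr
        (Subgroup.commutator_mem_commutator (Subgroup.mem_top g) hr)
    exact commutatorElement_eq_one_iff_commute.mp h1
  have key : ⁅(⊤ : Subgroup F), S⁆ ≤ N := by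
    rw [Subgroup.commutator_le]
    intro g _ s hs
    suffices hq : ⁅π g, π s⁆ = 1 by
      rw [← map_commutatorElement] at hq
      exact (QuotientGroup.eq_one_iff _).mp hq
    have hmem : s ∈ ((⁅S₁, S₁⁆ ⊓ ⁅S₂, S₂⁆ : Subgroup F) : Set F) * ((R : Subgroup F) : Set F) := by
      rw [← Subgroup.mul_normal]
      exact hS hs
    obtain ⟨d, hd, r, hr, hdr⟩ := hmem
    have hdr' : d * r = s := hdr
    have hπs : π s = π d * π r := by rw [← map_mul]; exact (congrArg π hdr').symm
    rw [hπs, comm_mul_central _ _ _ (rcent r hr)]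
    -- now show ⁅π g, π d⁆ = 1 for d ∈ ⁅S₁,S₁⁆ ⊓ ⁅S₂,S₂⁆
    have hmain : (⊤ : Subgroup F) ≤ Subgroup.comap π (Subgroup.centralizer {π d}) := by
      rw [← hF, sup_le_iff]
      constructor
      · intro s₁ hs₁
        rw [Subgroup.mem_comap]
        have hcent : ∀ y ∈ S₂.map (π : F →* F ⧸ N), ⁅π s₁, y⁆ ∈ Subgroup.center (F ⧸ N) := by
          rintro y ⟨s₂, hs₂, rfl⟩
          rw [← map_commutatorElement]
          exact rcent _ (h12 (Subgroup.commutator_mem_commutator hs₁ hs₂))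
        have hdK : π d ∈ ⁅S₂.map (π : F →* F ⧸ N), S₂.map (π : F →* F ⧸ N)⁆ := by
          rw [← Subgroup.map_commutator]
          exact Subgroup.mem_map_of_mem _ hd.2
        have h1 : ⁅π s₁, π d⁆ = 1 := aux_comm (π s₁) _ hcent _ hdK
        exact Subgroup.mem_centralizer_iff.mpr (fun h hh => by
          rw [Set.mem_singleton_iff] at hh; subst hh
          exact (commutatorElement_eq_one_iff_commute.mp h1).eq.symm)
      · intro s₂ hs₂
        rw [Subgroup.mem_comap]
        have hcent : ∀ y ∈ S₁.map (π : F →* F ⧸ N), ⁅π s₂, y⁆ ∈ Subgroup.center (F ⧸ N) := by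
          rintro y ⟨s₁, hs₁, rfl⟩
          rw [← map_commutatorElement]
          have : ⁅s₂, s₁⁆ ∈ R := by
            have := Subgroup.commutator_mem_commutator hs₁ hs₂
            have h' : ⁅s₂, s₁⁆ = ⁅s₁, s₂⁆⁻¹ := by rw [commutatorElement_inv]
            rw [h']
            exact R.inv_mem (h12 this)
          exact rcent _ this
        have hdK : π d ∈ ⁅S₁.map (π : F →* F ⧸ N), S₁.map (π : F →* F ⧸ N)⁆ := by
          rw [← Subgroup.map_commutator]
          exact Subgroup.mem_map_of_mem _ hd.1
        have h1 : ⁅π s₂, π d⁆ = 1 := aux_comm (π s₂) _ hcent _ hdK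
        exact Subgroup.mem_centralizer_iff.mpr (fun h hh => by
          rw [Set.mem_singleton_iff] at hh; subst hh
          exact (commutatorElement_eq_one_iff_commute.mp h1).eq.symm)
    have := Subgroup.mem_comap.mp (hmain (Subgroup.mem_top g))
    have hc := Subgroup.mem_centralizer_iff.mp this (π d) rfl
    exact commutatorElement_eq_one_iff_commute.mpr hc.symm
  apply le_antisymm
  · exact le_inf (Subgroup.commutator_le_right ⊤ R)
      (Subgroup.commutator_mono le_rfl hRS)
  · exact le_trans inf_le_right key


end SchurCP
end

section
/- If Z = [H,H] ∩ [K,K] = 1, then θ' : H²(G, D) → H²(H, D) ⊕ H²(K, D) ⊕ Hom(H ⊗ K, D) is injective. -/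
/-!
Setting (central products): `G` is a group with normal subgroups `H` and `K` such that
`G = HK` (i.e. `H ⊔ K = ⊤`) and `[H, K] = 1` (i.e. every element of `H` commutes with
every element of `K`).  We set `A = H ⊓ K` and `Z = ⁅H,H⁆ ⊓ ⁅K,K⁆`; both are central
in `G`.  Coefficients are taken in a divisible abelian group `D`, regarded as a trivial
module.  Second cohomology `H2 X D` is realized concretely as (inhomogeneous)
2-cocycles modulo 2-coboundaries, and `Hom(X, D)` is realized as `Additive X →+ D`.
-/

open scoped TensorProduct

set_option maxHeartbeats 1000000
set_option synthInstance.maxHeartbeats 1000000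
set_option synthInstance.maxSize 2000

namespace SchurCP

variable (G : Type) [Group G] (D : Type) [AddCommGroup D]

variable {G D}

/-- Helper: rearrange an equation in an additive commutative group. -/
theorem rearrange3 {D : Type} [AddCommGroup D] {x1 x2 x3 y1 y2 y3 : D}
    (e : x1 + x2 - x3 = y1 + y2 - y3) :
    y3 - x3 = (y1 - x1) + (y2 - x2) := by
  have h : y3 - x3 - ((y1 - x1) + (y2 - x2)) = (x1 + x2 - x3) - (y1 + y2 - y3) := by abel
  rw [e, sub_self] at h
  exact sub_eq_zero.mp h

/-- If `Z = ⁅H,H⁆ ⊓ ⁅K,K⁆ = 1`, then `θ' = (res, res, ν) :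
H²(G, D) → H²(H, D) ⊕ H²(K, D) ⊕ Hom(H ⊗ K, D)` is injective. -/
theorem theta'_injective {G : Type} [Group G] (H K : Subgroup G) [H.Normal] [K.Normal]
    (hprod : H ⊔ K = ⊤) (hcomm : ∀ h ∈ H, ∀ k ∈ K, Commute h k)
    (D : Type) [AddCommGroup D] [DivisibleBy D ℤ]
    (hZ : ⁅H, H⁆ ⊓ ⁅K, K⁆ = ⊥)
    (ν : H2 G D →+ (AbTensor ↥H ↥K →+ D))
    (hν : ∀ f : cocycles2 G D, ∀ (h : ↥H) (k : ↥K),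
      ν (H2mk f) (tmulAb h k) = (f : G → G → D) ↑h ↑k - (f : G → G → D) ↑k ↑h) :
    Function.Injective (fun ξ : H2 G D =>
      (H2Map H.subtype ξ, H2Map K.subtype ξ, ν ξ)) := by
  classical
  -- It suffices to show that each element of the "kernel" is zero.
  have key : ∀ f : cocycles2 G D, H2Map H.subtype (H2mk f) = 0 →
      H2Map K.subtype (H2mk f) = 0 → ν (H2mk f) = 0 → H2mk f = 0 := by
    intro f h1 h2 h3
    -- The cocycle identity for `f`, stated on `G`.
    have cocy : ∀ g h k : G, (f : G → G → D) g h + (f : G → G → D) (g * h) k =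
        (f : G → G → D) h k + (f : G → G → D) g (h * k) := f.2
    -- Extract the coboundary data on `H`.
    have h1' : (pullCocycle H.subtype f : cocycles2 ↥H D) ∈
        (coboundaries2 ↥H D).addSubgroupOf (cocycles2 ↥H D) := by
      rw [← QuotientAddGroup.eq_zero_iff]
      exact h1
    rw [AddSubgroup.mem_addSubgroupOf] at h1'
    obtain ⟨φ, hφ⟩ := h1'
    have h2' : (pullCocycle K.subtype f : cocycles2 ↥K D) ∈
        (coboundaries2 ↥K D).addSubgroupOf (cocycles2 ↥K D) := by
      rw [← QuotientAddGroup.eq_zero_iff]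
      exact h2
    rw [AddSubgroup.mem_addSubgroupOf] at h2'
    obtain ⟨ψ, hψ⟩ := h2'
    have hφG : ∀ (x y : G) (hx : x ∈ H) (hy : y ∈ H),
        (f : G → G → D) x y = φ ⟨x, hx⟩ + φ ⟨y, hy⟩ - φ ⟨x * y, mul_mem hx hy⟩ :=
      fun x y hx hy => hφ ⟨x, hx⟩ ⟨y, hy⟩
    have hψG : ∀ (x y : G) (hx : x ∈ K) (hy : y ∈ K),
        (f : G → G → D) x y = ψ ⟨x, hx⟩ + ψ ⟨y, hy⟩ - ψ ⟨x * y, mul_mem hx hy⟩ :=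
      fun x y hx hy => hψ ⟨x, hx⟩ ⟨y, hy⟩
    -- Symmetry of `f` on `H × K`, coming from `ν = 0`.
    have hsymm : ∀ (x y : G), x ∈ H → y ∈ K →
        (f : G → G → D) x y = (f : G → G → D) y x := by
      intro x y hx hy
      have hv := hν f ⟨x, hx⟩ ⟨y, hy⟩
      rw [h3] at hv
      exact (sub_eq_zero.mp (by exact hv.symm))
    -- `H ⊓ K` is commutative (it is central in `G`).
    letI instCG : CommGroup ↥(H ⊓ K) :=
      { (inferInstance : Group ↥(H ⊓ K)) with
        mul_comm := fun a b => Subtype.ext (hcomm ↑a a.2.1 ↑b b.2.2) }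
    -- The difference `χ = ψ - φ` is a homomorphism on `H ⊓ K`.
    have χadd : ∀ a b : ↥(H ⊓ K),
        (ψ ⟨↑(a * b), (a * b).2.2⟩ - φ ⟨↑(a * b), (a * b).2.1⟩) =
          (ψ ⟨↑a, a.2.2⟩ - φ ⟨↑a, a.2.1⟩) + (ψ ⟨↑b, b.2.2⟩ - φ ⟨↑b, b.2.1⟩) := by
      intro a b
      have e1 : (f : G → G → D) ↑a ↑b =
          φ ⟨↑a, a.2.1⟩ + φ ⟨↑b, b.2.1⟩ - φ ⟨↑(a * b), (a * b).2.1⟩ :=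
        hφG ↑a ↑b a.2.1 b.2.1
      have e2 : (f : G → G → D) ↑a ↑b =
          ψ ⟨↑a, a.2.2⟩ + ψ ⟨↑b, b.2.2⟩ - ψ ⟨↑(a * b), (a * b).2.2⟩ :=
        hψG ↑a ↑b a.2.2 b.2.2
      exact rearrange3 (e1.symm.trans e2)
    let χ : Additive ↥(H ⊓ K) →+ D :=
      { toFun := fun a => ψ ⟨↑(Additive.toMul a), (Additive.toMul a).2.2⟩ -
          φ ⟨↑(Additive.toMul a), (Additive.toMul a).2.1⟩
        map_zero' := by
          have e1 : (f : G → G → D) 1 1 = φ 1 + φ 1 - φ 1 := by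
            have e := hφG 1 1 H.one_mem H.one_mem; simp only [mul_one] at e; exact e
          have e2 : (f : G → G → D) 1 1 = ψ 1 + ψ 1 - ψ 1 := by
            have e := hψG 1 1 K.one_mem K.one_mem; simp only [mul_one] at e; exact e
          have eφ : φ 1 = (f : G → G → D) 1 1 := by rw [e1]; abel
          have eψ : ψ 1 = (f : G → G → D) 1 1 := by rw [e2]; abel
          show ψ ⟨(1 : G), _⟩ - φ ⟨(1 : G), _⟩ = 0
          rw [show (⟨(1 : G), (1 : ↥(H ⊓ K)).2.2⟩ : ↥K) = 1 from rfl,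
            show (⟨(1 : G), (1 : ↥(H ⊓ K)).2.1⟩ : ↥H) = 1 from rfl, eφ, eψ, sub_self]
        map_add' := fun a b => χadd (Additive.toMul a) (Additive.toMul b) }
    -- The map from `H ⊓ K` into `H^ab × K^ab` is injective since `Z = 1`.
    let pH : ↥(H ⊓ K) →* Abelianization ↥H :=
      Abelianization.of.comp (Subgroup.inclusion inf_le_left)
    let pK : ↥(H ⊓ K) →* Abelianization ↥K :=
      Abelianization.of.comp (Subgroup.inclusion inf_le_right)
    let P : Additive ↥(H ⊓ K) →+
        Additive (Abelianization ↥H) × Additive (Abelianization ↥K) :=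
      (MonoidHom.toAdditive pH).prod (MonoidHom.toAdditive pK)
    have hPinj : Function.Injective P := by
      rw [injective_iff_map_eq_zero]
      intro a ha
      have haH : pH (Additive.toMul a) = 1 := congrArg Prod.fst ha
      have haK : pK (Additive.toMul a) = 1 := congrArg Prod.snd ha
      have hcH : (Subgroup.inclusion (inf_le_left (a := H) (b := K)) (Additive.toMul a))
          ∈ commutator ↥H := (QuotientGroup.eq_one_iff _).mp haH
      have hcK : (Subgroup.inclusion (inf_le_right (a := H) (b := K)) (Additive.toMul a))
          ∈ commutator ↥K := (QuotientGroup.eq_one_iff _).mp haK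
      have hmapH : (commutator ↥H).map H.subtype = ⁅H, H⁆ := by
        rw [commutator_def, Subgroup.map_commutator, ← MonoidHom.range_eq_map,
          Subgroup.range_subtype]
      have hmapK : (commutator ↥K).map K.subtype = ⁅K, K⁆ := by
        rw [commutator_def, Subgroup.map_commutator, ← MonoidHom.range_eq_map,
          Subgroup.range_subtype]
      have hinH : ((Additive.toMul a : ↥(H ⊓ K)) : G) ∈ ⁅H, H⁆ := by
        rw [← hmapH]
        exact ⟨_, hcH, rfl⟩
      have hinK : ((Additive.toMul a : ↥(H ⊓ K)) : G) ∈ ⁅K, K⁆ := by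
        rw [← hmapK]
        exact ⟨_, hcK, rfl⟩
      have : ((Additive.toMul a : ↥(H ⊓ K)) : G) ∈ (⊥ : Subgroup G) := by
        rw [← hZ]; exact ⟨hinH, hinK⟩
      have h1 : (Additive.toMul a : ↥(H ⊓ K)) = 1 :=
        Subtype.ext (Subgroup.mem_bot.mp this)
      exact Additive.toMul.injective h1
    -- Extend `χ` along `P` using divisibility of `D`.
    obtain ⟨X, hX⟩ :=
      (Module.Baer.of_divisible (A := D)).extension_property_addMonoidHom P hPinj χ
    -- Correction homomorphisms on `H` and `K`.
    let αt : ↥H → D := fun x =>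
      X (Additive.ofMul (Abelianization.of x), 0)
    let βt : ↥K → D := fun k =>
      X (0, Additive.ofMul (Abelianization.of k))
    have hαt : ∀ x y : ↥H, αt (x * y) = αt x + αt y := by
      intro x y
      show X _ = X _ + X _
      rw [← map_add]
      congr 1
      rw [Prod.mk_add_mk, add_zero, map_mul]
      rfl
    have hβt : ∀ x y : ↥K, βt (x * y) = βt x + βt y := by
      intro x y
      show X _ = X _ + X _
      rw [← map_add]
      congr 1
      rw [Prod.mk_add_mk, add_zero, map_mul]
      rfl
    have hmatch : ∀ a : ↥(H ⊓ K),
        αt ⟨↑a, a.2.1⟩ + βt ⟨↑a, a.2.2⟩ = ψ ⟨↑a, a.2.2⟩ - φ ⟨↑a, a.2.1⟩ := by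
      intro a
      have hXa := DFunLike.congr_fun hX (Additive.ofMul a)
      calc αt ⟨↑a, a.2.1⟩ + βt ⟨↑a, a.2.2⟩
          = X ((Additive.ofMul (Abelianization.of (⟨↑a, a.2.1⟩ : ↥H)), 0) +
              (0, Additive.ofMul (Abelianization.of (⟨↑a, a.2.2⟩ : ↥K)))) := by
            rw [map_add]
        _ = X (P (Additive.ofMul a)) := by
            rw [Prod.mk_add_mk, add_zero, zero_add]
            rfl
        _ = χ (Additive.ofMul a) := hXa
        _ = ψ ⟨↑a, a.2.2⟩ - φ ⟨↑a, a.2.1⟩ := rfl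
    -- The corrected coboundary data.
    let φ' : ↥H → D := fun x => φ x + αt x
    let ψ' : ↥K → D := fun k => ψ k - βt k
    have hφ'G : ∀ (x y : G) (hx : x ∈ H) (hy : y ∈ H),
        (f : G → G → D) x y = φ' ⟨x, hx⟩ + φ' ⟨y, hy⟩ - φ' ⟨x * y, mul_mem hx hy⟩ := by
      intro x y hx hy
      show (f : G → G → D) x y = (φ ⟨x, hx⟩ + αt ⟨x, hx⟩) + (φ ⟨y, hy⟩ + αt ⟨y, hy⟩) -
        (φ ⟨x * y, mul_mem hx hy⟩ + αt ⟨x * y, mul_mem hx hy⟩)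
      rw [show (⟨x * y, mul_mem hx hy⟩ : ↥H) = ⟨x, hx⟩ * ⟨y, hy⟩ from rfl, hαt]
      rw [hφG x y hx hy]
      abel
    have hψ'G : ∀ (x y : G) (hx : x ∈ K) (hy : y ∈ K),
        (f : G → G → D) x y = ψ' ⟨x, hx⟩ + ψ' ⟨y, hy⟩ - ψ' ⟨x * y, mul_mem hx hy⟩ := by
      intro x y hx hy
      show (f : G → G → D) x y = (ψ ⟨x, hx⟩ - βt ⟨x, hx⟩) + (ψ ⟨y, hy⟩ - βt ⟨y, hy⟩) -
        (ψ ⟨x * y, mul_mem hx hy⟩ - βt ⟨x * y, mul_mem hx hy⟩)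
      rw [show (⟨x * y, mul_mem hx hy⟩ : ↥K) = ⟨x, hx⟩ * ⟨y, hy⟩ from rfl, hβt]
      rw [hψG x y hx hy]
      abel
    have hmatch' : ∀ (g : G) (hgH : g ∈ H) (hgK : g ∈ K),
        ψ' ⟨g, hgK⟩ = φ' ⟨g, hgH⟩ := by
      intro g hgH hgK
      have hm := hmatch ⟨g, hgH, hgK⟩
      show ψ ⟨g, hgK⟩ - βt ⟨g, hgK⟩ = φ ⟨g, hgH⟩ + αt ⟨g, hgH⟩
      have h0 : αt ⟨g, hgH⟩ + βt ⟨g, hgK⟩ - (ψ ⟨g, hgK⟩ - φ ⟨g, hgH⟩) = 0 :=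
        sub_eq_zero.mpr hm
      have h1 : (ψ ⟨g, hgK⟩ - βt ⟨g, hgK⟩) - (φ ⟨g, hgH⟩ + αt ⟨g, hgH⟩) =
          -(αt ⟨g, hgH⟩ + βt ⟨g, hgK⟩ - (ψ ⟨g, hgK⟩ - φ ⟨g, hgH⟩)) := by abel
      rw [h0, neg_zero] at h1
      exact sub_eq_zero.mp h1
    -- Well-definedness of the candidate 1-cochain `Φ` in the special form.
    have W0 : ∀ (h' a k : G) (hh' : h' ∈ H) (haH : a ∈ H) (haK : a ∈ K) (hk : k ∈ K),
        φ' ⟨h' * a, mul_mem hh' haH⟩ + ψ' ⟨k, hk⟩ - (f : G → G → D) (h' * a) k =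
        φ' ⟨h', hh'⟩ + ψ' ⟨a * k, mul_mem haK hk⟩ - (f : G → G → D) h' (a * k) := by
      intro h' a k hh' haH haK hk
      have C := cocy h' a k
      have E1 := hφ'G h' a hh' haH
      have E2 := hψ'G a k haK hk
      have E3 := hmatch' a haH haK
      have d1 : (f : G → G → D) h' a + (f : G → G → D) (h' * a) k -
          ((f : G → G → D) a k + (f : G → G → D) h' (a * k)) = 0 := sub_eq_zero.mpr C
      have d2 : (f : G → G → D) h' a -
          (φ' ⟨h', hh'⟩ + φ' ⟨a, haH⟩ - φ' ⟨h' * a, mul_mem hh' haH⟩) = 0 :=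
        sub_eq_zero.mpr E1
      have d3 : (f : G → G → D) a k -
          (ψ' ⟨a, haK⟩ + ψ' ⟨k, hk⟩ - ψ' ⟨a * k, mul_mem haK hk⟩) = 0 :=
        sub_eq_zero.mpr E2
      have d4 : ψ' ⟨a, haK⟩ - φ' ⟨a, haH⟩ = 0 := sub_eq_zero.mpr E3
      rw [← sub_eq_zero]
      have comb : (φ' ⟨h' * a, mul_mem hh' haH⟩ + ψ' ⟨k, hk⟩ -
            (f : G → G → D) (h' * a) k) -
          (φ' ⟨h', hh'⟩ + ψ' ⟨a * k, mul_mem haK hk⟩ - (f : G → G → D) h' (a * k)) =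
          -((f : G → G → D) h' a + (f : G → G → D) (h' * a) k -
              ((f : G → G → D) a k + (f : G → G → D) h' (a * k))) +
            ((f : G → G → D) h' a -
              (φ' ⟨h', hh'⟩ + φ' ⟨a, haH⟩ - φ' ⟨h' * a, mul_mem hh' haH⟩)) -
            ((f : G → G → D) a k -
              (ψ' ⟨a, haK⟩ + ψ' ⟨k, hk⟩ - ψ' ⟨a * k, mul_mem haK hk⟩)) -
            (ψ' ⟨a, haK⟩ - φ' ⟨a, haH⟩) := by abel
      rw [comb, d1, d2, d3, d4]
      abel
    -- Well-definedness of `Φ`: independence of the chosen decomposition.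
    have W : ∀ (h k h' k' : G) (hh : h ∈ H) (hk : k ∈ K) (hh' : h' ∈ H) (hk' : k' ∈ K),
        h * k = h' * k' →
        φ' ⟨h, hh⟩ + ψ' ⟨k, hk⟩ - (f : G → G → D) h k =
        φ' ⟨h', hh'⟩ + ψ' ⟨k', hk'⟩ - (f : G → G → D) h' k' := by
      intro h k h' k' hh hk hh' hk' e
      have haH : h'⁻¹ * h ∈ H := H.mul_mem (H.inv_mem hh') hh
      have heq : h'⁻¹ * h = k' * k⁻¹ := by
        rw [inv_mul_eq_iff_eq_mul, ← mul_assoc, ← e, mul_assoc, mul_inv_cancel, mul_one]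
      have haK : h'⁻¹ * h ∈ K := by
        rw [heq]; exact K.mul_mem hk' (K.inv_mem hk)
      have hdh : h' * (h'⁻¹ * h) = h := by rw [← mul_assoc, mul_inv_cancel, one_mul]
      have hdk : (h'⁻¹ * h) * k = k' := by
        rw [heq, mul_assoc, inv_mul_cancel, mul_one]
      have w0 := W0 h' (h'⁻¹ * h) k hh' haH haK hk
      have p1 : (⟨h' * (h'⁻¹ * h), mul_mem hh' haH⟩ : ↥H) = ⟨h, hh⟩ := Subtype.ext hdh
      have p2 : (⟨(h'⁻¹ * h) * k, mul_mem haK hk⟩ : ↥K) = ⟨k', hk'⟩ := Subtype.ext hdk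
      rw [p1, p2, hdh, hdk] at w0
      exact w0
    -- Choose a decomposition `g = d1 g * d2 g` for each `g`.
    have hdec : ∀ g : G, ∃ h k : G, h ∈ H ∧ k ∈ K ∧ h * k = g := by
      intro g
      have hg : g ∈ (↑(H ⊔ K) : Set G) := by
        rw [hprod]; exact Set.mem_univ g
      rw [Subgroup.mul_normal H K] at hg
      obtain ⟨h, hh, k, hk, e⟩ := hg
      exact ⟨h, k, hh, hk, e⟩
    choose d1 d2 hdH hdK hdmul using hdec
    -- The coboundary witness.
    refine (QuotientAddGroup.eq_zero_iff f).mpr ?_; rw [AddSubgroup.mem_addSubgroupOf]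
    refine ⟨fun g => φ' ⟨d1 g, hdH g⟩ + ψ' ⟨d2 g, hdK g⟩ - (f : G → G → D) (d1 g) (d2 g),
      ?_⟩
    intro g g'
    dsimp only
    -- Replace the decomposition of `g * g'` by `(d1 g * d1 g') * (d2 g * d2 g')`.
    have ck : d2 g * d1 g' = d1 g' * d2 g := (hcomm (d1 g') (hdH g') (d2 g) (hdK g)).symm
    have hbig : (d1 g * d1 g') * (d2 g * d2 g') = g * g' := by
      calc (d1 g * d1 g') * (d2 g * d2 g') = d1 g * ((d1 g' * d2 g) * d2 g') := by
            rw [mul_assoc, mul_assoc]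
        _ = d1 g * ((d2 g * d1 g') * d2 g') := by rw [ck]
        _ = (d1 g * d2 g) * (d1 g' * d2 g') := by
            rw [mul_assoc (d2 g), ← mul_assoc]
        _ = g * g' := by rw [hdmul, hdmul]
    have hW := W (d1 (g * g')) (d2 (g * g')) (d1 g * d1 g') (d2 g * d2 g')
      (hdH (g * g')) (hdK (g * g')) (mul_mem (hdH g) (hdH g'))
      (mul_mem (hdK g) (hdK g')) ((hdmul (g * g')).trans hbig.symm)
    rw [hW]
    -- Expand `φ'` and `ψ'` at the products, and use the cocycle identities.
    have Hφ := hφ'G (d1 g) (d1 g') (hdH g) (hdH g')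
    have Hψ := hψ'G (d2 g) (d2 g') (hdK g) (hdK g')
    have C1 := cocy (d1 g) (d2 g) (d1 g' * d2 g')
    have C2 := cocy (d2 g) (d1 g') (d2 g')
    have C3 := cocy (d1 g') (d2 g) (d2 g')
    have C4 := cocy (d1 g) (d1 g') (d2 g * d2 g')
    -- normalize group-element arguments
    rw [show (f : G → G → D) (d2 g) (d1 g') = (f : G → G → D) (d1 g') (d2 g) from
      (hsymm (d1 g') (d2 g) (hdH g') (hdK g)).symm, ck] at C2
    rw [show d2 g * (d1 g' * d2 g') = d1 g' * (d2 g * d2 g') by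
      rw [← mul_assoc, ck, mul_assoc]] at C1
    conv_lhs => rw [show g = d1 g * d2 g from (hdmul g).symm, show g' = d1 g' * d2 g' from
      (hdmul g').symm]
    -- Linear combination of the identities.
    have e1 : (f : G → G → D) (d1 g) (d2 g) +
        (f : G → G → D) (d1 g * d2 g) (d1 g' * d2 g') -
        ((f : G → G → D) (d2 g) (d1 g' * d2 g') +
          (f : G → G → D) (d1 g) (d1 g' * (d2 g * d2 g'))) = 0 := sub_eq_zero.mpr C1
    have e2 : (f : G → G → D) (d1 g') (d2 g) + (f : G → G → D) (d1 g' * d2 g) (d2 g') -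
        ((f : G → G → D) (d1 g') (d2 g') + (f : G → G → D) (d2 g) (d1 g' * d2 g')) = 0 :=
      sub_eq_zero.mpr C2
    have e3 : (f : G → G → D) (d1 g') (d2 g) + (f : G → G → D) (d1 g' * d2 g) (d2 g') -
        ((f : G → G → D) (d2 g) (d2 g') + (f : G → G → D) (d1 g') (d2 g * d2 g')) = 0 :=
      sub_eq_zero.mpr C3
    have e4 : (f : G → G → D) (d1 g) (d1 g') +
        (f : G → G → D) (d1 g * d1 g') (d2 g * d2 g') -
        ((f : G → G → D) (d1 g') (d2 g * d2 g') +
          (f : G → G → D) (d1 g) (d1 g' * (d2 g * d2 g'))) = 0 := sub_eq_zero.mpr C4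
    have e5 : (f : G → G → D) (d1 g) (d1 g') -
        (φ' ⟨d1 g, hdH g⟩ + φ' ⟨d1 g', hdH g'⟩ -
          φ' ⟨d1 g * d1 g', mul_mem (hdH g) (hdH g')⟩) = 0 := sub_eq_zero.mpr Hφ
    have e6 : (f : G → G → D) (d2 g) (d2 g') -
        (ψ' ⟨d2 g, hdK g⟩ + ψ' ⟨d2 g', hdK g'⟩ -
          ψ' ⟨d2 g * d2 g', mul_mem (hdK g) (hdK g')⟩) = 0 := sub_eq_zero.mpr Hψ
    rw [← sub_eq_zero]
    have comb : (f : G → G → D) (d1 g * d2 g) (d1 g' * d2 g') -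
        ((φ' ⟨d1 g, hdH g⟩ + ψ' ⟨d2 g, hdK g⟩ - (f : G → G → D) (d1 g) (d2 g)) +
          (φ' ⟨d1 g', hdH g'⟩ + ψ' ⟨d2 g', hdK g'⟩ -
            (f : G → G → D) (d1 g') (d2 g')) -
          (φ' ⟨d1 g * d1 g', mul_mem (hdH g) (hdH g')⟩ +
            ψ' ⟨d2 g * d2 g', mul_mem (hdK g) (hdK g')⟩ -
            (f : G → G → D) (d1 g * d1 g') (d2 g * d2 g'))) =
        ((f : G → G → D) (d1 g) (d2 g) +
          (f : G → G → D) (d1 g * d2 g) (d1 g' * d2 g') -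
          ((f : G → G → D) (d2 g) (d1 g' * d2 g') +
            (f : G → G → D) (d1 g) (d1 g' * (d2 g * d2 g')))) -
        ((f : G → G → D) (d1 g') (d2 g) + (f : G → G → D) (d1 g' * d2 g) (d2 g') -
          ((f : G → G → D) (d1 g') (d2 g') +
            (f : G → G → D) (d2 g) (d1 g' * d2 g'))) +
        ((f : G → G → D) (d1 g') (d2 g) + (f : G → G → D) (d1 g' * d2 g) (d2 g') -
          ((f : G → G → D) (d2 g) (d2 g') +
            (f : G → G → D) (d1 g') (d2 g * d2 g'))) -
        ((f : G → G → D) (d1 g) (d1 g') +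
          (f : G → G → D) (d1 g * d1 g') (d2 g * d2 g') -
          ((f : G → G → D) (d1 g') (d2 g * d2 g') +
            (f : G → G → D) (d1 g) (d1 g' * (d2 g * d2 g')))) +
        ((f : G → G → D) (d1 g) (d1 g') -
          (φ' ⟨d1 g, hdH g⟩ + φ' ⟨d1 g', hdH g'⟩ -
            φ' ⟨d1 g * d1 g', mul_mem (hdH g) (hdH g')⟩)) +
        ((f : G → G → D) (d2 g) (d2 g') -
          (ψ' ⟨d2 g, hdK g⟩ + ψ' ⟨d2 g', hdK g'⟩ -
            ψ' ⟨d2 g * d2 g', mul_mem (hdK g) (hdK g')⟩)) := by abel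
    rw [comb, e1, e2, e3, e4, e5, e6]
    abel
  -- Deduce injectivity from triviality of the kernel.
  intro a b hab
  simp only [Prod.mk.injEq] at hab
  obtain ⟨eH, eK, eν⟩ := hab
  obtain ⟨f, hf⟩ := QuotientAddGroup.mk'_surjective
    ((coboundaries2 G D).addSubgroupOf (cocycles2 G D)) (a - b)
  have h1 : H2Map H.subtype (H2mk f) = 0 := by
    have : H2mk f = a - b := hf
    rw [this, map_sub, eH, sub_self]
  have h2 : H2Map K.subtype (H2mk f) = 0 := by
    have : H2mk f = a - b := hf
    rw [this, map_sub, eK, sub_self]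
  have h3 : ν (H2mk f) = 0 := by
    have : H2mk f = a - b := hf
    rw [this, map_sub, eν, sub_self]
  have : H2mk f = 0 := key f h1 h2 h3
  have hab0 : a - b = 0 := by
    rw [← hf]; exact this
  exact sub_eq_zero.mp hab0

end SchurCP
end
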